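/- arXiv:2008.00779 — 5 statements merged into one kernel-verified Lean document; each statement's English description precedes it below -/
import Mathlib

section
/- If G belongs to the class T_h, then the pathwidth of G is at least h. -/
open SimpleGraph

/-- A tree decomposition of a graph `G`. -/
structure TreeDecomp {V : Type} (G : SimpleGraph V) where
  ι : Type
  tree : SimpleGraph ι
  isTree : tree.IsTree
  bag : ι → Finset V
  covers : ∀ v : V, ∃ x, v ∈ bag x
  coversEdge : ∀ ⦃u v : V⦄, G.Adj u v → ∃ x, u ∈ bag x ∧ v ∈ bag x
  bagConn : ∀ v : V, (tree.induce {x | v ∈ bag x}).Connected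

/-- `G` has a tree decomposition of width at most `k` (bags of size at most `k+1`). -/
def TwLE {V : Type} (G : SimpleGraph V) (k : ℕ) : Prop :=
  ∃ D : TreeDecomp G, ∀ x, (D.bag x).card ≤ k + 1

/-- A path decomposition of a graph `G`: a sequence of bags. -/
structure PathDecomp {V : Type} (G : SimpleGraph V) where
  n : ℕ
  bag : Fin n → Finset V
  covers : ∀ v : V, ∃ i, v ∈ bag i
  coversEdge : ∀ ⦃u v : V⦄, G.Adj u v → ∃ i, u ∈ bag i ∧ v ∈ bag i
  consecutive : ∀ (v : V) (i j k : Fin n), i ≤ j → j ≤ k → v ∈ bag i → v ∈ bag k → v ∈ bag j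

/-- `G` has a path decomposition of width at most `k` (bags of size at most `k+1`). -/
def PwLE {V : Type} (G : SimpleGraph V) (k : ℕ) : Prop :=
  ∃ P : PathDecomp G, ∀ i, (P.bag i).card ≤ k + 1

/-- A copy of a subdivision of the tree `T` inside the graph `G`:
branch vertices `φ x`, and for each edge of `T` a path of `G` between the
corresponding branch vertices, internally disjoint from all branch vertices
and from the paths of all other edges. -/
structure SubdivCopy {α V : Type} (T : SimpleGraph α) (G : SimpleGraph V) where
  φ : α → V
  inj : Function.Injective φ
  path : ∀ ⦃x y : α⦄, T.Adj x y → G.Walk (φ x) (φ y)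
  isPath : ∀ ⦃x y : α⦄ (h : T.Adj x y), (path h).IsPath
  branch : ∀ ⦃x y : α⦄ (h : T.Adj x y) (z : α), φ z ∈ (path h).support → z = x ∨ z = y
  disj : ∀ ⦃x y x' y' : α⦄ (h : T.Adj x y) (h' : T.Adj x' y'),
    ({x, y} : Set α) ≠ {x', y'} →
    ∀ v, v ∈ (path h).support → v ∈ (path h').support →
      v ∈ φ '' (({x, y} : Set α) ∩ {x', y'})

/-- The set of vertices used by a subdivision copy. -/
def SubdivCopy.supp {α V : Type} {T : SimpleGraph α} {G : SimpleGraph V}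
    (c : SubdivCopy T G) : Set V :=
  Set.range c.φ ∪ {v | ∃ x y, ∃ h : T.Adj x y, v ∈ (c.path h).support}

/-- `G` contains a subdivision of `T` as a subgraph. -/
def ContainsSubdiv {α V : Type} (T : SimpleGraph α) (G : SimpleGraph V) : Prop :=
  Nonempty (SubdivCopy T G)

/-- `S` is (isomorphic to) a subdivision of `T`: a subdivision copy of `T`
using all vertices and all edges of `S`. -/
def IsSubdivisionOf {α W : Type} (T : SimpleGraph α) (S : SimpleGraph W) : Prop :=
  ∃ c : SubdivCopy T S, c.supp = Set.univ ∧
    ∀ ⦃u w : W⦄, S.Adj u w → ∃ x y, ∃ h : T.Adj x y, s(u, w) ∈ (c.path h).edges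

/-- The complete binary tree of height `h`, as a simple graph: vertices are
binary strings of length at most `h`, with edges between a string and its
one-letter extensions. -/
def CBT (h : ℕ) : SimpleGraph {l : List Bool // l.length ≤ h} :=
  SimpleGraph.fromRel (fun x y => ∃ b, y.val = b :: x.val)

/-- The root of the complete binary tree. -/
def CBTroot (h : ℕ) : {l : List Bool // l.length ≤ h} := ⟨[], by simp⟩

/-- The complete ternary tree of height `h`, as a simple graph. -/
def CTT (h : ℕ) : SimpleGraph {l : List (Fin 3) // l.length ≤ h} :=
  SimpleGraph.fromRel (fun x y => ∃ b, y.val = b :: x.val)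

/-- The root of the complete ternary tree. -/
def CTTroot (h : ℕ) : {l : List (Fin 3) // l.length ≤ h} := ⟨[], by simp⟩

/-- There are `a ∈ A` and `b ∈ B` joined by a walk of `G` avoiding `C`. -/
def LinkedAvoiding {V : Type} (G : SimpleGraph V) (A B C : Set V) : Prop :=
  ∃ a ∈ A, ∃ b ∈ B, ∃ p : G.Walk a b, ∀ x ∈ p.support, x ∉ C

/-- The classes `𝒯_h`: `InT 0 G` iff `G` is connected (hence non-empty);
`InT (h+1) G` iff `G` is connected and has three pairwise disjoint vertex sets
inducing graphs in `𝒯_h`, any two of which are linked by a path avoiding the third. -/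
def InTAux : ℕ → (V : Type) → SimpleGraph V → Prop
  | 0, _, G => G.Connected
  | h + 1, V, G => G.Connected ∧ ∃ V₁ V₂ V₃ : Set V,
      Disjoint V₁ V₂ ∧ Disjoint V₁ V₃ ∧ Disjoint V₂ V₃ ∧
      InTAux h V₁ (G.induce V₁) ∧ InTAux h V₂ (G.induce V₂) ∧ InTAux h V₃ (G.induce V₃) ∧
      LinkedAvoiding G V₁ V₂ V₃ ∧ LinkedAvoiding G V₁ V₃ V₂ ∧ LinkedAvoiding G V₂ V₃ V₁

def InT (h : ℕ) {V : Type} (G : SimpleGraph V) : Prop := InTAux h V G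


lemma cross {V : Type} {G : SimpleGraph V} (P : PathDecomp G) (j k : Fin P.n) (hjk : j ≤ k)
    {u w : V} (W : G.Walk u w) :
    w ∈ P.bag k → ∀ i : Fin P.n, i ≤ j → u ∈ P.bag i → ∃ v ∈ W.support, v ∈ P.bag j := by
  induction W with
  | nil => exact fun hw i hij hu => ⟨_, by simp, P.consecutive _ i j k hij hjk hu hw⟩
  | cons h p ih =>
    intro hw i hij hu
    replace ih := ih hw
    obtain ⟨m, hm1, hm2⟩ := P.coversEdge h
    by_cases hmj : j ≤ m
    · exact ⟨_, by simp, P.consecutive _ i j m hij hmj hu hm1⟩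
    · obtain ⟨v, hv, hvb⟩ := ih m (le_of_not_ge hmj) hm2
      exact ⟨v, by simp [hv], hvb⟩

lemma LinkedAvoiding.symm' {V : Type} {G : SimpleGraph V} {A B C : Set V}
    (h : LinkedAvoiding G A B C) : LinkedAvoiding G B A C := by
  obtain ⟨a, ha, b, hb, p, hp⟩ := h
  exact ⟨b, hb, a, ha, p.reverse, fun x hx => hp x (by simpa using hx)⟩

lemma walk_in_set {V : Type} {G : SimpleGraph V} {A : Set V}
    (hconn : (G.induce A).Connected) {u a : V} (hu : u ∈ A) (ha : a ∈ A) :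
    ∃ p : G.Walk u a, ∀ x ∈ p.support, x ∈ A := by
  obtain ⟨q⟩ := hconn.preconnected ⟨u, hu⟩ ⟨a, ha⟩
  refine ⟨q.map (SimpleGraph.Embedding.induce A).toHom, ?_⟩
  intro x hx
  replace hx : x ∈ (q.map (SimpleGraph.Embedding.induce A).toHom).support := hx
  rw [Walk.support_map, List.mem_map] at hx
  obtain ⟨y, _, rfl⟩ := hx
  exact y.2

lemma step {V : Type} {G : SimpleGraph V} (P : PathDecomp G) {A B C : Set V}
    (hAB : Disjoint A B) (hCB : Disjoint C B)
    (hAconn : (G.induce A).Connected) (hCconn : (G.induce C).Connected)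
    (L : LinkedAvoiding G A C B)
    {ta tb tc : Fin P.n} (h1 : ta ≤ tb) (h2 : tb ≤ tc)
    (hu : ∃ u ∈ A, u ∈ P.bag ta) (hw : ∃ w ∈ C, w ∈ P.bag tc) :
    ∃ v ∈ P.bag tb, v ∉ B := by
  obtain ⟨u, huA, hub⟩ := hu
  obtain ⟨w, hwC, hwb⟩ := hw
  obtain ⟨a, haA, b, hbC, p, hp⟩ := L
  obtain ⟨q1, hq1⟩ := walk_in_set hAconn huA haA
  obtain ⟨q2, hq2⟩ := walk_in_set hCconn hbC hwC
  have hWB : ∀ x ∈ ((q1.append p).append q2).support, x ∉ B := by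
    intro x hx
    rw [Walk.mem_support_append_iff, Walk.mem_support_append_iff] at hx
    rcases hx with (hx | hx) | hx
    · exact Set.disjoint_left.mp hAB (hq1 x hx)
    · exact hp x hx
    · exact Set.disjoint_left.mp hCB (hq2 x hx)
  obtain ⟨v, hv, hvb⟩ := cross P tb tc h2 ((q1.append p).append q2) hwb ta h1 hub
  exact ⟨v, hvb, hWB v hv⟩

noncomputable def PathDecomp.restrict {V : Type} {G : SimpleGraph V} (P : PathDecomp G)
    (s : Set V) : PathDecomp (G.induce s) :=
  letI := Classical.decPred (· ∈ s)
  { n := P.n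
    bag := fun i => (P.bag i).subtype (· ∈ s)
    covers := fun v => by
      obtain ⟨i, hi⟩ := P.covers v.1
      exact ⟨i, Finset.mem_subtype.mpr hi⟩
    coversEdge := fun u v h => by
      obtain ⟨i, h1, h2⟩ := P.coversEdge h
      exact ⟨i, Finset.mem_subtype.mpr h1, Finset.mem_subtype.mpr h2⟩
    consecutive := fun v i j k hij hjk h1 h2 =>
      Finset.mem_subtype.mpr (P.consecutive v.1 i j k hij hjk
        (Finset.mem_subtype.mp h1) (Finset.mem_subtype.mp h2)) }

lemma restrict_witness {V : Type} {G : SimpleGraph V} (P : PathDecomp G) (s : Set V)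
    (t : Fin P.n) (hh : 0 < ((P.restrict s).bag t).card) :
    ∃ u ∈ s, u ∈ P.bag t := by
  classical
  obtain ⟨x, hx⟩ := Finset.card_pos.mp hh
  exact ⟨x.1, x.2, Finset.mem_subtype.mp hx⟩

lemma final {V : Type} {G : SimpleGraph V} (P : PathDecomp G) (s : Set V) (t : Fin P.n)
    {h : ℕ} (hh : h + 1 ≤ ((P.restrict s).bag t).card)
    {v : V} (hv : v ∈ P.bag t) (hvs : v ∉ s) : h + 2 ≤ (P.bag t).card := by
  classical
  set S := (P.restrict s).bag t with hS
  have hmap : S.image Subtype.val ⊆ P.bag t := by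
    intro x hx
    obtain ⟨y, hy, rfl⟩ := Finset.mem_image.mp hx
    exact Finset.mem_subtype.mp hy
  have hcard : (S.image Subtype.val).card = S.card :=
    Finset.card_image_of_injective _ Subtype.val_injective
  have hvnot : v ∉ S.image Subtype.val := by
    intro hmem
    obtain ⟨y, _, rfl⟩ := Finset.mem_image.mp hmem
    exact hvs y.2
  have hsub : insert v (S.image Subtype.val) ⊆ P.bag t := by
    intro x hx
    rcases Finset.mem_insert.mp hx with rfl | hx
    · exact hv
    · exact hmap hx
  have hc := Finset.card_le_card hsub
  rw [Finset.card_insert_of_notMem hvnot, hcard] at hc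
  omega

lemma inT_connected {V : Type} {G : SimpleGraph V} {h : ℕ} (hG : InT h G) : G.Connected := by
  cases h with
  | zero => exact hG
  | succ h => exact hG.1

lemma heavyBag : ∀ (h : ℕ) {V : Type} (G : SimpleGraph V), InT h G →
    ∀ P : PathDecomp G, ∃ i, h + 1 ≤ (P.bag i).card := by
  intro h
  induction h with
  | zero =>
    intro V G hG P
    obtain ⟨v⟩ := hG.nonempty
    obtain ⟨i, hi⟩ := P.covers v
    exact ⟨i, Finset.one_le_card.mpr ⟨v, hi⟩⟩
  | succ h ih =>
    intro V G hG P
    obtain ⟨hconn, V₁, V₂, V₃, d12, d13, d23, h1, h2, h3, L12, L13, L23⟩ := hG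
    obtain ⟨t1, ht1⟩ := ih (G.induce V₁) h1 (P.restrict V₁)
    obtain ⟨t2, ht2⟩ := ih (G.induce V₂) h2 (P.restrict V₂)
    obtain ⟨t3, ht3⟩ := ih (G.induce V₃) h3 (P.restrict V₃)
    have w1 := restrict_witness P V₁ t1 (by omega)
    have w2 := restrict_witness P V₂ t2 (by omega)
    have w3 := restrict_witness P V₃ t3 (by omega)
    have c1 : (G.induce V₁).Connected := inT_connected h1
    have c2 : (G.induce V₂).Connected := inT_connected h2
    have c3 : (G.induce V₃).Connected := inT_connected h3
    rcases le_total t1 t2 with h12 | h21 <;> rcases le_total t2 t3 with h23 | h32 <;>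
      rcases le_total t1 t3 with h13 | h31
    -- t1 ≤ t2 ≤ t3 : middle V₂, A=V₁, C=V₃
    · obtain ⟨v, hv, hvB⟩ := step P d12 d23.symm c1 c3 L13 h12 h23 w1 w3
      exact ⟨t2, final P V₂ t2 ht2 hv hvB⟩
    · obtain ⟨v, hv, hvB⟩ := step P d12 d23.symm c1 c3 L13 h12 h23 w1 w3
      exact ⟨t2, final P V₂ t2 ht2 hv hvB⟩
    -- t1 ≤ t2, t3 ≤ t2, t1 ≤ t3 : order t1 ≤ t3 ≤ t2 : middle V₃, A=V₁, C=V₂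
    · obtain ⟨v, hv, hvB⟩ := step P d13 d23 c1 c2 L12 h13 h32 w1 w2
      exact ⟨t3, final P V₃ t3 ht3 hv hvB⟩
    -- t1 ≤ t2, t3 ≤ t2, t3 ≤ t1 : order t3 ≤ t1 ≤ t2 : middle V₁, A=V₃, C=V₂
    · obtain ⟨v, hv, hvB⟩ := step P d13.symm d12.symm c3 c2 L23.symm' h31 h12 w3 w2
      exact ⟨t1, final P V₁ t1 ht1 hv hvB⟩
    -- t2 ≤ t1, t2 ≤ t3, t1 ≤ t3 : order t2 ≤ t1 ≤ t3 : middle V₁, A=V₂, C=V₃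
    · obtain ⟨v, hv, hvB⟩ := step P d12.symm d13.symm c2 c3 L23 h21 h13 w2 w3
      exact ⟨t1, final P V₁ t1 ht1 hv hvB⟩
    -- t2 ≤ t1, t2 ≤ t3, t3 ≤ t1 : order t2 ≤ t3 ≤ t1 : middle V₃, A=V₂, C=V₁
    · obtain ⟨v, hv, hvB⟩ := step P d23 d13 c2 c1 L12.symm' h23 h31 w2 w1
      exact ⟨t3, final P V₃ t3 ht3 hv hvB⟩
    -- t2 ≤ t1, t3 ≤ t2, t1 ≤ t3 : forces equal; order t3 ≤ t2 ≤ t1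
    · obtain ⟨v, hv, hvB⟩ := step P d23.symm d12 c3 c1 L13.symm' h32 h21 w3 w1
      exact ⟨t2, final P V₂ t2 ht2 hv hvB⟩
    -- t2 ≤ t1, t3 ≤ t2, t3 ≤ t1 : order t3 ≤ t2 ≤ t1 : middle V₂, A=V₃, C=V₁
    · obtain ⟨v, hv, hvB⟩ := step P d23.symm d12 c3 c1 L13.symm' h32 h21 w3 w1
      exact ⟨t2, final P V₂ t2 ht2 hv hvB⟩

theorem stmt1 {V : Type} (G : SimpleGraph V) (h : ℕ) (hG : InT h G) :
    ∀ k, PwLE G k → h ≤ k := by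
  intro k ⟨P, hP⟩
  obtain ⟨i, hi⟩ := heavyBag h G hG P
  have := hP i
  omega
end

section
/- If G belongs to the class T_h, then G contains a subdivision of a complete binary tree of height h as a subgraph. -/
open SimpleGraph

namespace CBTProof

variable {V : Type} {G : SimpleGraph V}

/-- First-hit truncation of a walk at a set. -/
lemma exists_firstHit {S : Set V} {a b : V} (p : G.Walk a b) (hb : b ∈ S) :
    ∃ z, z ∈ S ∧ ∃ q : G.Walk a z, (∀ x ∈ q.support, x ∈ p.support) ∧
      ∀ x ∈ q.support, x ∈ S → x = z := by
  induction p with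
  | nil => exact ⟨_, hb, .nil, by simp, by simp⟩
  | @cons u v w h p ih =>
    by_cases ha : u ∈ S
    · exact ⟨u, ha, .nil, by simp, by simp⟩
    · obtain ⟨z, hzS, q, hsub, hfirst⟩ := ih hb
      refine ⟨z, hzS, .cons h q, ?_, ?_⟩
      · intro x hx
        rw [SimpleGraph.Walk.support_cons] at hx ⊢
        rcases List.mem_cons.mp hx with hx | hx
        · simp [hx]
        · simp [hsub x hx]
      · intro x hx hxS
        rw [SimpleGraph.Walk.support_cons] at hx
        rcases List.mem_cons.mp hx with hx | hx
        · exact absurd (hx ▸ hxS) ha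
        · exact hfirst x hx hxS

/-- Append of two paths sharing only the common endpoint is a path. -/
lemma IsPath.append_of_inter {a b c : V} {p : G.Walk a b} {q : G.Walk b c}
    (hp : p.IsPath) (hq : q.IsPath)
    (hint : ∀ x ∈ p.support, x ∈ q.support → x = b) : (p.append q).IsPath := by
  apply SimpleGraph.Walk.IsPath.mk'
  rw [SimpleGraph.Walk.support_append]
  apply List.Nodup.append hp.support_nodup
  · have := hq.support_nodup
    rw [q.support_eq_cons] at this
    exact this.of_cons
  · intro x hxp hxq
    have hxq' : x ∈ q.support := by
      rw [q.support_eq_cons]; exact List.mem_cons_of_mem _ hxq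
    have hx := hint x hxp hxq'
    subst hx
    have := hq.support_nodup
    rw [q.support_eq_cons] at this
    exact (List.nodup_cons.mp this).1 hxq

/-- Intersection of takeUntil and dropUntil supports of a path. -/
lemma takeUntil_dropUntil_inter [DecidableEq V] {a b z : V} {p : G.Walk a b}
    (hp : p.IsPath) (hz : z ∈ p.support) :
    ∀ x ∈ (p.takeUntil z hz).support, x ∈ (p.dropUntil z hz).support → x = z := by
  intro x hxt hxd
  have hspec := p.take_spec hz
  have hnd : ((p.takeUntil z hz).append (p.dropUntil z hz)).support.Nodup := by
    rw [hspec]; exact hp.support_nodup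
  rw [SimpleGraph.Walk.support_append] at hnd
  rw [(p.dropUntil z hz).support_eq_cons] at hxd
  rcases List.mem_cons.mp hxd with hxd | hxd
  · exact hxd
  · exact absurd hxt (fun hxt => (List.disjoint_of_nodup_append hnd) hxt hxd)




abbrev Vh (h : ℕ) := {l : List Bool // l.length ≤ h}

def snoc {h : ℕ} (d : Bool) (x : Vh h) : Vh (h + 1) :=
  ⟨x.1 ++ [d], by simpa using x.2⟩

lemma snoc_ne_root {h : ℕ} (d : Bool) (x : Vh h) : snoc d x ≠ CBTroot (h + 1) := by
  intro hc
  have := congrArg (fun z : Vh (h+1) => z.1) hc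
  simp [snoc, CBTroot] at this

lemma snoc_inj {h : ℕ} {d d' : Bool} {x y : Vh h}
    (hc : snoc d x = snoc d' y) : d = d' ∧ x = y := by
  have h1 := congrArg (fun z : Vh (h+1) => z.1.getLast?) hc
  have h2 := congrArg (fun z : Vh (h+1) => z.1.dropLast) hc
  simp [snoc, List.getLast?_concat] at h1 h2
  exact ⟨h1, Subtype.ext h2⟩

lemma cbt_zero_not_adj {x y : Vh 0} : ¬ (CBT 0).Adj x y := by
  intro hxy
  rw [CBT, SimpleGraph.fromRel_adj] at hxy
  rcases hxy.2 with ⟨b, hb⟩ | ⟨b, hb⟩ <;>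
  · have hx := x.2; have hy := y.2
    first
    | (rw [hb] at hy; simp at hy)
    | (rw [hb] at hx; simp at hx)

lemma vh_zero_eq (x y : Vh 0) : x = y := by
  have hx := Nat.le_zero.mp x.2
  have hy := Nat.le_zero.mp y.2
  exact Subtype.ext ((List.length_eq_zero_iff.mp hx).trans (List.length_eq_zero_iff.mp hy).symm)

lemma cbt_adj_of_snoc {h : ℕ} {d : Bool} {x y : Vh h} (hxy : (CBT h).Adj x y) :
    (CBT (h+1)).Adj (snoc d x) (snoc d y) := by
  rw [CBT, SimpleGraph.fromRel_adj] at hxy ⊢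
  refine ⟨fun hc => hxy.1 (snoc_inj hc).2, ?_⟩
  rcases hxy.2 with ⟨b, hb⟩ | ⟨b, hb⟩
  · exact Or.inl ⟨b, by simp [snoc, hb]⟩
  · exact Or.inr ⟨b, by simp [snoc, hb]⟩

lemma cbt_root_adj {h : ℕ} (d : Bool) : (CBT (h+1)).Adj (CBTroot (h+1)) (snoc d (CBTroot h)) := by
  rw [CBT, SimpleGraph.fromRel_adj]
  exact ⟨fun hc => snoc_ne_root d _ hc.symm, Or.inl ⟨d, by simp [snoc, CBTroot]⟩⟩

/-- Case analysis for edges of `CBT (h+1)`. -/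
lemma adj_succ_cases {h : ℕ} {x y : Vh (h+1)} (hxy : (CBT (h+1)).Adj x y) :
    (∃ d, x = CBTroot (h+1) ∧ y = snoc d (CBTroot h)) ∨
    (∃ d, y = CBTroot (h+1) ∧ x = snoc d (CBTroot h)) ∨
    (∃ d x' y', x = snoc d x' ∧ y = snoc d y' ∧ (CBT h).Adj x' y') := by
  rw [CBT, SimpleGraph.fromRel_adj] at hxy
  obtain ⟨hne, hor⟩ := hxy
  have main : ∀ (u v : Vh (h+1)) (b : Bool), v.1 = b :: u.1 →
      (u = CBTroot (h+1) ∧ ∃ d, v = snoc d (CBTroot h)) ∨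
      (∃ d u' v', u = snoc d u' ∧ v = snoc d v' ∧ (CBT h).Adj u' v') := by
    intro u v b hv
    by_cases hu : u.1 = []
    · left
      refine ⟨Subtype.ext (by simp [CBTroot, hu]), b, Subtype.ext ?_⟩
      simp [snoc, CBTroot, hv, hu]
    · right
      have hlu : u.1.dropLast.length ≤ h := by
        have := u.2; have := (List.length_dropLast : u.1.dropLast.length = u.1.length - 1)
        have hpos : 0 < u.1.length := List.length_pos_iff.mpr hu
        omega
      have hlv : v.1.dropLast.length ≤ h := by
        have := v.2; have := (List.length_dropLast : v.1.dropLast.length = v.1.length - 1)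
        have hpos : 0 < v.1.length := by rw [hv]; simp
        omega
      refine ⟨u.1.getLast hu, ⟨u.1.dropLast, hlu⟩, ⟨v.1.dropLast, hlv⟩, ?_, ?_, ?_⟩
      · exact Subtype.ext (by simp [snoc, List.dropLast_append_getLast hu])
      · refine Subtype.ext ?_
        have hvne : v.1 ≠ [] := by rw [hv]; simp
        have hgl : v.1.getLast hvne = u.1.getLast hu := by
          rw [(List.getLast_congr _ _ hv : v.1.getLast hvne = _)]
          exact List.getLast_cons hu
        simp only [snoc]
        rw [← hgl, List.dropLast_append_getLast hvne]
      · rw [CBT, SimpleGraph.fromRel_adj]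
        constructor
        · intro hc
          have := congrArg (fun z : Vh h => z.1.length) hc
          simp only at this
          rw [hv] at this
          obtain ⟨c, t, hct⟩ := List.exists_cons_of_ne_nil hu
          rw [hct] at this
          simp at this
        · left
          refine ⟨b, ?_⟩
          show v.1.dropLast = b :: u.1.dropLast
          rw [hv]
          obtain ⟨c, t, hct⟩ := List.exists_cons_of_ne_nil hu
          rw [hct]
          rfl
  rcases hor with ⟨b, hb⟩ | ⟨b, hb⟩
  · rcases main x y b hb with ⟨h1, d, h2⟩ | ⟨d, u', v', h1, h2, h3⟩
    · exact Or.inl ⟨d, h1, h2⟩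
    · exact Or.inr (Or.inr ⟨d, u', v', h1, h2, h3⟩)
  · rcases main y x b hb with ⟨h1, d, h2⟩ | ⟨d, u', v', h1, h2, h3⟩
    · exact Or.inr (Or.inl ⟨d, h1, h2⟩)
    · exact Or.inr (Or.inr ⟨d, v', u', h2, h1, h3.symm⟩)




/-- Push a subdivision copy forward along a graph embedding. -/
def SubdivCopy.mapEmb {α V W : Type} {T : SimpleGraph α} {G : SimpleGraph V}
    {G' : SimpleGraph W} (f : G ↪g G') (c : SubdivCopy T G) : SubdivCopy T G' where
  φ := fun a => f.toHom (c.φ a)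
  inj := fun a b hab => c.inj (f.injective hab)
  path := fun {x y} h => (c.path h).map f.toHom
  isPath := fun {x y} h => SimpleGraph.Walk.map_isPath_of_injective f.injective (c.isPath h)
  branch := fun {x y} h z hz => by
    rw [SimpleGraph.Walk.support_map] at hz
    obtain ⟨x, hx, hfx⟩ := List.mem_map.mp hz
    have : x = c.φ z := f.injective hfx
    exact c.branch h z (this ▸ hx)
  disj := fun {x y x' y'} h h' hne v hv hv' => by
    rw [SimpleGraph.Walk.support_map] at hv hv'
    obtain ⟨w, hw, hfw⟩ := List.mem_map.mp hv
    obtain ⟨w', hw', hfw'⟩ := List.mem_map.mp hv'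
    have hww : w' = w := f.injective (hfw'.trans hfw.symm)
    obtain ⟨z, hz, hφz⟩ := c.disj h h' hne w hw (by rwa [hww] at hw')
    exact ⟨z, hz, by show f.toHom (c.φ z) = v; rw [hφz]; exact hfw⟩

lemma SubdivCopy.supp_mapEmb {α V W : Type} {T : SimpleGraph α} {G : SimpleGraph V}
    {G' : SimpleGraph W} (f : G ↪g G') (c : SubdivCopy T G) :
    (SubdivCopy.mapEmb f c).supp = f '' c.supp := by
  ext v
  constructor
  · rintro (⟨x, hx⟩ | ⟨x, y, h, hv⟩)
    · exact ⟨c.φ x, Or.inl ⟨x, rfl⟩, hx⟩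
    · replace hv : v ∈ ((c.path h).map f.toHom).support := hv
      rw [SimpleGraph.Walk.support_map] at hv
      obtain ⟨w, hw, hfw⟩ := List.mem_map.mp hv
      exact ⟨w, Or.inr ⟨x, y, h, hw⟩, hfw⟩
  · rintro ⟨w, (⟨x, hx⟩ | ⟨x, y, h, hw⟩), hfw⟩
    · exact Or.inl ⟨x, by simp [SubdivCopy.mapEmb, ← hfw, ← hx]⟩
    · refine Or.inr ⟨x, y, h, ?_⟩
      show v ∈ ((c.path h).map f.toHom).support
      rw [SimpleGraph.Walk.support_map]
      exact List.mem_map.mpr ⟨w, hw, hfw⟩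





section Assemble

variable {V : Type} {G : SimpleGraph V} {h : ℕ}
variable (c' : Bool → SubdivCopy (CBT h) G) (z : V)

lemma dlen {x : Vh (h+1)} : x.1.dropLast.length ≤ h := by
  have h1 := x.2
  rw [List.length_dropLast]
  omega

lemma vh_cases (x : Vh (h+1)) : x = CBTroot (h+1) ∨ ∃ d y, x = snoc d y := by
  by_cases hx : x.1 = []
  · exact Or.inl (Subtype.ext (by simp [CBTroot, hx]))
  · exact Or.inr ⟨x.1.getLast hx, ⟨x.1.dropLast, dlen⟩,
      Subtype.ext (by simp [snoc, List.dropLast_append_getLast hx])⟩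

/-- The combined branch-vertex map for the assembled copy. -/
def aphi : Vh (h+1) → V := fun x =>
  if hx : x.1 = [] then z
  else (c' (x.1.getLast hx)).φ ⟨x.1.dropLast, dlen⟩

lemma aphi_eq_z {x : Vh (h+1)} (hx : x.1 = []) : aphi c' z x = z := by
  simp only [aphi]
  rw [dif_pos hx]

lemma aphi_root : aphi c' z (CBTroot (h+1)) = z := aphi_eq_z c' z rfl

lemma aphi_ne_nil {x : Vh (h+1)} (hx : x.1 ≠ []) :
    aphi c' z x = (c' (x.1.getLast hx)).φ ⟨x.1.dropLast, dlen⟩ := by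
  simp only [aphi]
  rw [dif_neg hx]

lemma aphi_snoc (d : Bool) (x : Vh h) : aphi c' z (snoc d x) = (c' d).φ x := by
  have h1 : (snoc d x).1 ≠ [] := by simp [snoc]
  rw [aphi_ne_nil c' z h1]
  have hgl : (snoc d x).1.getLast h1 = d := List.getLast_concat
  revert hgl
  generalize (snoc d x).1.getLast h1 = b
  rintro rfl
  congr 1
  exact Subtype.ext (by simp [snoc])

lemma ynil {x y : Vh (h+1)} (hxy : (CBT (h+1)).Adj x y) (hx : x.1 = []) : y.1 ≠ [] := by
  intro hy
  exact hxy.ne (Subtype.ext (hx.trans hy.symm))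

lemma y_eq_snoc_root {x y : Vh (h+1)} (hxy : (CBT (h+1)).Adj x y) (hx : x.1 = [])
    {hy : y.1 ≠ []} : y = snoc (y.1.getLast hy) (CBTroot h) := by
  rcases adj_succ_cases hxy with ⟨d, h1, h2⟩ | ⟨d, h1, h2⟩ | ⟨d, x', y', h1, h2, h3⟩
  · have hl : y.1 = [d] := by rw [h2]; rfl
    have hgl : y.1.getLast hy = d := by
      rw [(List.getLast_congr _ (by simp) hl : y.1.getLast hy = [d].getLast (by simp))]
      rfl
    rw [hgl, ← h2]
  · exact absurd (congrArg (fun w : Vh (h+1) => w.1) h2) (by simp [snoc, hx])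
  · exact absurd (congrArg (fun w : Vh (h+1) => w.1) h1) (by simp [snoc, hx])

lemma adj_dropLast {x y : Vh (h+1)} (hxy : (CBT (h+1)).Adj x y) (hx : x.1 ≠ [])
    (hy : y.1 ≠ []) :
    (CBT h).Adj ⟨x.1.dropLast, dlen⟩ ⟨y.1.dropLast, dlen⟩ ∧ y.1.getLast hy = x.1.getLast hx := by
  rcases adj_succ_cases hxy with ⟨d, h1, h2⟩ | ⟨d, h1, h2⟩ | ⟨d, x', y', h1, h2, h3⟩
  · exact absurd (congrArg (fun w : Vh (h+1) => w.1) h1) (by simp [CBTroot, hx])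
  · exact absurd (congrArg (fun w : Vh (h+1) => w.1) h1) (by simp [CBTroot, hy])
  · have hx' : (⟨x.1.dropLast, dlen⟩ : Vh h) = x' := by
      refine Subtype.ext ?_
      rw [h1]
      exact (List.dropLast_concat : (x'.1 ++ [d]).dropLast = x'.1)
    have hy' : (⟨y.1.dropLast, dlen⟩ : Vh h) = y' := by
      refine Subtype.ext ?_
      rw [h2]
      exact (List.dropLast_concat : (y'.1 ++ [d]).dropLast = y'.1)
    have hgx : x.1.getLast hx = d := by
      rw [show x.1.getLast hx = (snoc d x').1.getLast (by simp [snoc]) from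
        List.getLast_congr _ _ (congrArg (fun w : Vh (h+1) => w.1) h1)]
      exact List.getLast_concat
    have hgy : y.1.getLast hy = d := by
      rw [show y.1.getLast hy = (snoc d y').1.getLast (by simp [snoc]) from
        List.getLast_congr _ _ (congrArg (fun w : Vh (h+1) => w.1) h2)]
      exact List.getLast_concat
    refine ⟨?_, hgy.trans hgx.symm⟩
    rw [hx', hy']
    exact h3

variable (π : (d : Bool) → G.Walk z ((c' d).φ (CBTroot h)))

lemma aphi_y_root_edge {x y : Vh (h+1)} (hxy : (CBT (h+1)).Adj x y) (hx : x.1 = []) :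
    aphi c' z y = (c' (y.1.getLast (ynil hxy hx))).φ (CBTroot h) := by
  conv_lhs => rw [y_eq_snoc_root hxy hx (hy := ynil hxy hx)]
  exact aphi_snoc c' z _ _

lemma aphi_y_inner {x y : Vh (h+1)} (hxy : (CBT (h+1)).Adj x y) (hx : x.1 ≠ [])
    (hy : y.1 ≠ []) :
    aphi c' z y = (c' (x.1.getLast hx)).φ ⟨y.1.dropLast, dlen⟩ := by
  rw [aphi_ne_nil c' z hy, (adj_dropLast hxy hx hy).2]

/-- The combined edge-path map for the assembled copy. -/
def apath {x y : Vh (h+1)} (hxy : (CBT (h+1)).Adj x y) :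
    G.Walk (aphi c' z x) (aphi c' z y) :=
  if hx : x.1 = [] then
    (π (y.1.getLast (ynil hxy hx))).copy (aphi_eq_z c' z hx).symm
      (aphi_y_root_edge c' z hxy hx).symm
  else if hy : y.1 = [] then
    ((π (x.1.getLast (ynil hxy.symm hy))).copy (aphi_eq_z c' z hy).symm
      (aphi_y_root_edge c' z hxy.symm hy).symm).reverse
  else
    ((c' (x.1.getLast hx)).path (adj_dropLast hxy hx hy).1).copy
      (aphi_ne_nil c' z hx).symm (aphi_y_inner c' z hxy hx hy).symm

/-- Case description of `apath`. -/
lemma apath_spec (hπ : ∀ d, (π d).IsPath) {x y : Vh (h+1)} (hxy : (CBT (h+1)).Adj x y) :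
    (apath c' z π hxy).IsPath ∧
    ((∃ d, ({x, y} : Set (Vh (h+1))) = {CBTroot (h+1), snoc d (CBTroot h)} ∧
        ∀ v, v ∈ (apath c' z π hxy).support ↔ v ∈ (π d).support) ∨
     (∃ d x' y', ∃ h' : (CBT h).Adj x' y', ({x, y} : Set (Vh (h+1))) = {snoc d x', snoc d y'} ∧
        ∀ v, v ∈ (apath c' z π hxy).support ↔ v ∈ ((c' d).path h').support)) := by
  by_cases hx : x.1 = []
  · have hyne := ynil hxy hx
    have hd : y = snoc (y.1.getLast hyne) (CBTroot h) := y_eq_snoc_root hxy hx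
    have hx' : x = CBTroot (h+1) := Subtype.ext (by simp [CBTroot, hx])
    refine ⟨?_, Or.inl ⟨y.1.getLast hyne, ?_, ?_⟩⟩
    · simp only [apath, dif_pos hx]
      simpa using hπ _
    · exact congrArg₂ (fun a b => ({a, b} : Set (Vh (h+1)))) hx' hd
    · intro v
      simp [apath, dif_pos hx]
  · by_cases hy : y.1 = []
    · have hxne := ynil hxy.symm hy
      have hd : x = snoc (x.1.getLast hxne) (CBTroot h) := y_eq_snoc_root hxy.symm hy
      have hy' : y = CBTroot (h+1) := Subtype.ext (by simp [CBTroot, hy])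
      refine ⟨?_, Or.inl ⟨x.1.getLast hxne, ?_, ?_⟩⟩
      · simp only [apath, dif_neg hx, dif_pos hy]
        exact ((SimpleGraph.Walk.isPath_copy _ _ _).mpr (hπ _)).reverse
      · exact (congrArg₂ (fun a b => ({a, b} : Set (Vh (h+1)))) hd hy').trans
          (Set.pair_comm _ _)
      · intro v
        simp [apath, dif_neg hx, dif_pos hy]
    · have had := adj_dropLast hxy hx hy
      have hx' : x = snoc (x.1.getLast hx) ⟨x.1.dropLast, dlen⟩ :=
        Subtype.ext (by simp [snoc, List.dropLast_append_getLast hx])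
      have hy' : y = snoc (x.1.getLast hx) ⟨y.1.dropLast, dlen⟩ := by
        refine Subtype.ext ?_
        show y.1 = y.1.dropLast ++ [x.1.getLast hx]
        rw [← had.2, List.dropLast_append_getLast]
      refine ⟨?_, Or.inr ⟨x.1.getLast hx, ⟨x.1.dropLast, dlen⟩, ⟨y.1.dropLast, dlen⟩,
        had.1, ?_, ?_⟩⟩
      · simp only [apath, dif_neg hx, dif_neg hy]
        exact (SimpleGraph.Walk.isPath_copy _ _ _).mpr ((c' _).isPath _)
      · exact congrArg₂ (fun a b => ({a, b} : Set (Vh (h+1)))) hx' hy'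
      · intro v
        simp [apath, dif_neg hx, dif_neg hy]

lemma assemble
    (hπ : ∀ d, (π d).IsPath)
    (hB : ∀ d, ∀ x ∈ (π d).support, x ∈ (c' d).supp → x = (c' d).φ (CBTroot h))
    (hC : ∀ d d', d ≠ d' → ∀ x ∈ (π d).support, x ∈ (π d').support → x = z)
    (hD : ∀ d d', d ≠ d' → ∀ x ∈ (π d).support, x ∉ (c' d').supp)
    (hE : ∀ d d', d ≠ d' → ∀ x ∈ (c' d).supp, x ∉ (c' d').supp)
    (hF : ∀ d, z ∉ (c' d).supp) :
    ∃ c : SubdivCopy (CBT (h+1)) G, c.φ (CBTroot (h+1)) = z ∧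
      ∀ v ∈ c.supp, v ∈ (π false).support ∨ v ∈ (π true).support ∨
        v ∈ (c' false).supp ∨ v ∈ (c' true).supp := by
  have hrange : ∀ (d : Bool) (x' : Vh h), (c' d).φ x' ∈ (c' d).supp :=
    fun d x' => Or.inl ⟨x', rfl⟩
  have hsub : ∀ (d : Bool) ⦃x' y' : Vh h⦄ (h' : (CBT h).Adj x' y'),
      ∀ v ∈ ((c' d).path h').support, v ∈ (c' d).supp :=
    fun d x' y' h' v hv => Or.inr ⟨_, _, h', hv⟩
  refine ⟨⟨aphi c' z, ?_, fun {x y} hxy => apath c' z π hxy,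
    fun {x y} hxy => (apath_spec c' z π hπ hxy).1, ?_, ?_⟩, aphi_root c' z, ?_⟩
  · -- injectivity
    intro a b hab
    rcases vh_cases a with ha | ⟨d, w, ha⟩ <;> rcases vh_cases b with hb | ⟨d', w', hb⟩
    · exact ha.trans hb.symm
    · subst ha; subst hb
      rw [aphi_root, aphi_snoc] at hab
      exact absurd (hab ▸ hrange d' w') (hF d')
    · subst ha; subst hb
      rw [aphi_root, aphi_snoc] at hab
      exact absurd (hab ▸ hrange d w) (hF d)
    · subst ha; subst hb
      rw [aphi_snoc, aphi_snoc] at hab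
      by_cases hdd : d = d'
      · subst hdd
        rw [(c' d).inj hab]
      · have hmem : (c' d).φ w ∈ (c' d').supp := by rw [hab]; exact hrange d' w'
        exact absurd hmem (hE d d' hdd _ (hrange d w))
  · -- branch
    intro x y hxy w hw
    have hmem : w ∈ ({x, y} : Set (Vh (h+1))) → w = x ∨ w = y := by simp
    apply hmem
    rcases (apath_spec c' z π hπ hxy).2 with ⟨d, hset, hiff⟩ | ⟨d, x₀, y₀, h₀, hset, hiff⟩
    · have hw' := (hiff _).mp hw
      rcases vh_cases w with hwr | ⟨d₂, w', hwr⟩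
      · rw [hset, hwr]; exact Or.inl rfl
      · subst hwr
        rw [aphi_snoc] at hw'
        by_cases hdd : d₂ = d
        · subst hdd
          have := hB d₂ _ hw' (hrange d₂ w')
          have hww : w' = CBTroot h := (c' d₂).inj this
          rw [hset, hww]; exact Or.inr rfl
        · exact absurd (hrange d₂ w') (hD d d₂ (Ne.symm hdd) _ hw')
    · have hw' := (hiff _).mp hw
      rcases vh_cases w with hwr | ⟨d₂, w', hwr⟩
      · rw [hwr, aphi_root] at hw
        exact absurd (hsub d h₀ _ ((hiff _).mp hw)) (hF d)
      · subst hwr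
        rw [aphi_snoc] at hw'
        by_cases hdd : d₂ = d
        · subst hdd
          rcases (c' d₂).branch h₀ w' hw' with hwx | hwy
          · rw [hset, hwx]; exact Or.inl rfl
          · rw [hset, hwy]; exact Or.inr rfl
        · exact absurd (hsub d h₀ _ hw') (hE d₂ d hdd _ (hrange d₂ w'))
  · -- disj
    intro x y x' y' hxy hxy' hne v hv hv'
    rcases (apath_spec c' z π hπ hxy).2 with ⟨d, hset1, hiff1⟩ | ⟨d, x₀, y₀, h₀, hset1, hiff1⟩ <;>
      rcases (apath_spec c' z π hπ hxy').2 with ⟨d', hset2, hiff2⟩ | ⟨d', x₁, y₁, h₁, hset2, hiff2⟩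
    · by_cases hdd : d = d'
      · subst hdd
        exact absurd (hset1.trans hset2.symm) hne
      · have hvz := hC d d' hdd v ((hiff1 _).mp hv) ((hiff2 _).mp hv')
        refine ⟨CBTroot (h+1), ⟨?_, ?_⟩, by rw [aphi_root, hvz]⟩
        · rw [hset1]; exact Or.inl rfl
        · rw [hset2]; exact Or.inl rfl
    · have hv1 := (hiff1 _).mp hv
      have hv2 := hsub d' h₁ _ ((hiff2 _).mp hv')
      by_cases hdd : d = d'
      · subst hdd
        have hvt := hB d _ hv1 hv2
        refine ⟨snoc d (CBTroot h), ⟨?_, ?_⟩, by rw [aphi_snoc, ← hvt]⟩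
        · rw [hset1]; exact Or.inr rfl
        · rcases (c' d).branch h₁ (CBTroot h) (by rw [← hvt]; exact (hiff2 _).mp hv') with
            hh | hh
          · rw [hset2, hh]; exact Or.inl rfl
          · rw [hset2, hh]; exact Or.inr rfl
      · exact absurd hv2 (hD d d' hdd _ hv1)
    · have hv1 := hsub d h₀ _ ((hiff1 _).mp hv)
      have hv2 := (hiff2 _).mp hv'
      by_cases hdd : d' = d
      · subst hdd
        have hvt := hB d' _ hv2 hv1
        refine ⟨snoc d' (CBTroot h), ⟨?_, ?_⟩, by rw [aphi_snoc, ← hvt]⟩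
        · rcases (c' d').branch h₀ (CBTroot h) (by rw [← hvt]; exact (hiff1 _).mp hv) with
            hh | hh
          · rw [hset1, hh]; exact Or.inl rfl
          · rw [hset1, hh]; exact Or.inr rfl
        · rw [hset2]; exact Or.inr rfl
      · exact absurd hv1 (hD d' d hdd _ hv2)
    · by_cases hdd : d = d'
      · subst hdd
        by_cases hset0 : ({x₀, y₀} : Set (Vh h)) = {x₁, y₁}
        · exfalso
          apply hne
          rw [hset1, hset2]
          have himg := congrArg (Set.image (snoc d)) hset0
          rwa [Set.image_pair, Set.image_pair] at himg
        · obtain ⟨w, ⟨hw0, hw1⟩, hφw⟩ :=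
            (c' d).disj h₀ h₁ hset0 v ((hiff1 _).mp hv) ((hiff2 _).mp hv')
          refine ⟨snoc d w, ⟨?_, ?_⟩, by rw [aphi_snoc, hφw]⟩
          · rw [hset1]
            rcases hw0 with hw0 | hw0
            · exact Set.mem_insert_iff.mpr (Or.inl (congrArg (snoc d) hw0))
            · exact Set.mem_insert_iff.mpr (Or.inr (by
                simp only [Set.mem_singleton_iff] at hw0 ⊢
                exact congrArg (snoc d) hw0))
          · rw [hset2]
            rcases hw1 with hw1 | hw1
            · exact Set.mem_insert_iff.mpr (Or.inl (congrArg (snoc d) hw1))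
            · exact Set.mem_insert_iff.mpr (Or.inr (by
                simp only [Set.mem_singleton_iff] at hw1 ⊢
                exact congrArg (snoc d) hw1))
      · exact absurd (hsub d' h₁ _ ((hiff2 _).mp hv'))
          (hE d d' hdd _ (hsub d h₀ _ ((hiff1 _).mp hv)))
  · -- supp bound
    rintro v (⟨x, hx⟩ | ⟨x, y, hxy, hv⟩)
    · replace hx : aphi c' z x = v := hx
      rcases vh_cases x with hxr | ⟨d, w, hxr⟩
      · subst hxr
        rw [aphi_root] at hx
        exact Or.inl (hx ▸ (π false).start_mem_support)
      · subst hxr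
        rw [aphi_snoc] at hx
        cases d
        · exact Or.inr (Or.inr (Or.inl (hx ▸ hrange false w)))
        · exact Or.inr (Or.inr (Or.inr (hx ▸ hrange true w)))
    · replace hv : v ∈ (apath c' z π hxy).support := hv
      rcases (apath_spec c' z π hπ hxy).2 with ⟨d, hset, hiff⟩ | ⟨d, x₀, y₀, h₀, hset, hiff⟩
      · cases d
        · exact Or.inl ((hiff _).mp hv)
        · exact Or.inr (Or.inl ((hiff _).mp hv))
      · cases d
        · exact Or.inr (Or.inr (Or.inl (hsub false h₀ _ ((hiff _).mp hv))))
        · exact Or.inr (Or.inr (Or.inr (hsub true h₀ _ ((hiff _).mp hv))))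

end Assemble



lemma InT_connected {h : ℕ} {V : Type} {G : SimpleGraph V} (hG : InT h G) : G.Connected := by
  cases h with
  | zero => exact hG
  | succ h => exact hG.1

lemma LinkedAvoiding.symmAB {V : Type} {G : SimpleGraph V} {A B C : Set V}
    (hL : LinkedAvoiding G A B C) : LinkedAvoiding G B A C := by
  obtain ⟨a, ha, b, hb, p, hp⟩ := hL
  refine ⟨b, hb, a, ha, p.reverse, ?_⟩
  intro x hx
  rw [SimpleGraph.Walk.support_reverse] at hx
  exact hp x (List.mem_reverse.mp hx)

/-- The inductive step. -/
lemma step {V : Type} {G : SimpleGraph V} {h : ℕ}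
    (IH : ∀ {W : Type} (H : SimpleGraph W), InT h H → ∀ u : W,
      ∃ c : SubdivCopy (CBT h) H, ∃ p : H.Walk u (c.φ (CBTroot h)), p.IsPath ∧
        ∀ x ∈ p.support, x ∈ c.supp → x = c.φ (CBTroot h))
    (A B C : Set V)
    (hAB : Disjoint A B) (hAC : Disjoint A C) (hBC : Disjoint B C)
    (hA : InT h (G.induce A)) (hB : InT h (G.induce B)) (hC : InT h (G.induce C))
    (LB : LinkedAvoiding G A B C) (LC : LinkedAvoiding G A C B)
    (u w : V) (hw : w ∈ A) (P₀ : G.Walk u w)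
    (hP₀ : ∀ x ∈ P₀.support, x ∈ A ∪ B ∪ C → x = w) :
    ∃ c : SubdivCopy (CBT (h+1)) G, ∃ p : G.Walk u (c.φ (CBTroot (h+1))), p.IsPath ∧
      ∀ x ∈ p.support, x ∈ c.supp → x = c.φ (CBTroot (h+1)) := by
  classical
  have hwB : w ∉ B := Set.disjoint_left.mp hAB hw
  have hwC : w ∉ C := Set.disjoint_left.mp hAC hw
  -- the path P : a → b entering B
  obtain ⟨a, ha, b₀, hb₀, ω, hω⟩ := LB
  obtain ⟨b, hbB, q, hqsub, hqfirst⟩ := exists_firstHit ω hb₀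
  set P := q.bypass with hPdef
  have hPsub : ∀ x ∈ P.support, x ∈ q.support := fun x hx => q.support_bypass_subset hx
  have hP_B : ∀ x ∈ P.support, x ∈ B → x = b := fun x hx => hqfirst x (hPsub x hx)
  have hP_C : ∀ x ∈ P.support, x ∉ C := fun x hx => hω x (hqsub x (hPsub x hx))
  -- the path Q : a' → c entering C
  obtain ⟨a', ha', c₀, hc₀, ω', hω'⟩ := LC
  obtain ⟨c, hcC, q', hq'sub, hq'first⟩ := exists_firstHit ω' hc₀
  set Q := q'.bypass with hQdef
  have hQsub : ∀ x ∈ Q.support, x ∈ q'.support := fun x hx => q'.support_bypass_subset hx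
  have hQ_C : ∀ x ∈ Q.support, x ∈ C → x = c := fun x hx => hq'first x (hQsub x hx)
  have hQ_B : ∀ x ∈ Q.support, x ∉ B := fun x hx => hω' x (hq'sub x (hQsub x hx))
  -- walks inside A from w to a and a'
  have hAconn := InT_connected hA
  obtain ⟨M₂'⟩ := hAconn.preconnected ⟨w, hw⟩ ⟨a, ha⟩
  obtain ⟨M₃'⟩ := hAconn.preconnected ⟨w, hw⟩ ⟨a', ha'⟩
  let embA := (SimpleGraph.Embedding.induce A : G.induce A ↪g G)
  let M₂ : G.Walk w a := M₂'.map embA.toHom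
  let M₃ : G.Walk w a' := M₃'.map embA.toHom
  have hM₂A : ∀ x ∈ M₂.support, x ∈ A := by
    intro x hx
    replace hx : x ∈ (M₂'.map embA.toHom).support := hx
    rw [SimpleGraph.Walk.support_map] at hx
    obtain ⟨y, _, hy⟩ := List.mem_map.mp hx
    exact hy ▸ y.2
  have hM₃A : ∀ x ∈ M₃.support, x ∈ A := by
    intro x hx
    replace hx : x ∈ (M₃'.map embA.toHom).support := hx
    rw [SimpleGraph.Walk.support_map] at hx
    obtain ⟨y, _, hy⟩ := List.mem_map.mp hx
    exact hy ▸ y.2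
  -- the u→b and u→c access paths
  set X := (P₀.append (M₂.append P)).bypass with hXdef
  set Y := (P₀.append (M₃.append Q)).bypass with hYdef
  have hXpath : X.IsPath := SimpleGraph.Walk.bypass_isPath _
  have hYpath : Y.IsPath := SimpleGraph.Walk.bypass_isPath _
  have hXmem : ∀ x ∈ X.support,
      x ∈ P₀.support ∨ x ∈ M₂.support ∨ x ∈ P.support := by
    intro x hx
    have := (P₀.append (M₂.append P)).support_bypass_subset hx
    rw [SimpleGraph.Walk.mem_support_append_iff,
      SimpleGraph.Walk.mem_support_append_iff] at this
    tauto
  have hYmem : ∀ x ∈ Y.support,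
      x ∈ P₀.support ∨ x ∈ M₃.support ∨ x ∈ Q.support := by
    intro x hx
    have := (P₀.append (M₃.append Q)).support_bypass_subset hx
    rw [SimpleGraph.Walk.mem_support_append_iff,
      SimpleGraph.Walk.mem_support_append_iff] at this
    tauto
  have hX_B : ∀ x ∈ X.support, x ∈ B → x = b := by
    intro x hx hxB
    rcases hXmem x hx with hx' | hx' | hx'
    · exact absurd ((hP₀ x hx' (Or.inl (Or.inr hxB))) ▸ hxB) hwB
    · exact absurd hxB (Set.disjoint_left.mp hAB (hM₂A x hx'))
    · exact hP_B x hx' hxB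
  have hX_C : ∀ x ∈ X.support, x ∉ C := by
    intro x hx hxC
    rcases hXmem x hx with hx' | hx' | hx'
    · exact hwC (hP₀ x hx' (Or.inr hxC) ▸ hxC)
    · exact Set.disjoint_left.mp hAC (hM₂A x hx') hxC
    · exact hP_C x hx' hxC
  have hY_C : ∀ x ∈ Y.support, x ∈ C → x = c := by
    intro x hx hxC
    rcases hYmem x hx with hx' | hx' | hx'
    · exact absurd ((hP₀ x hx' (Or.inr hxC)) ▸ hxC) hwC
    · exact absurd hxC (Set.disjoint_left.mp hAC (hM₃A x hx'))
    · exact hQ_C x hx' hxC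
  have hY_B : ∀ x ∈ Y.support, x ∉ B := by
    intro x hx hxB
    rcases hYmem x hx with hx' | hx' | hx'
    · exact hwB (hP₀ x hx' (Or.inl (Or.inr hxB)) ▸ hxB)
    · exact Set.disjoint_left.mp hAB (hM₃A x hx') hxB
    · exact hQ_B x hx' hxB
  -- extract the split vertex z : the last vertex of X lying on Y
  have huY : u ∈ {x | x ∈ Y.support} := Y.start_mem_support
  obtain ⟨z, hzY, r, hrsub, hrfirst⟩ := exists_firstHit (S := {x | x ∈ Y.support}) X.reverse huY
  set X₁ := r.bypass.reverse with hX₁def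
  have hX₁path : X₁.IsPath := (SimpleGraph.Walk.bypass_isPath r).reverse
  have hX₁sub : ∀ x ∈ X₁.support, x ∈ X.support := by
    intro x hx
    rw [hX₁def, SimpleGraph.Walk.support_reverse] at hx
    have := r.support_bypass_subset (List.mem_reverse.mp hx)
    have := hrsub x this
    rw [SimpleGraph.Walk.support_reverse] at this
    exact List.mem_reverse.mp this
  have hX₁Y : ∀ x ∈ X₁.support, x ∈ Y.support → x = z := by
    intro x hx hxY
    rw [hX₁def, SimpleGraph.Walk.support_reverse] at hx
    exact hrfirst x (r.support_bypass_subset (List.mem_reverse.mp hx)) hxY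
  have hzX₁ : z ∈ X₁.support := SimpleGraph.Walk.start_mem_support _
  have hbX₁ : b ∈ X₁.support := SimpleGraph.Walk.end_mem_support _
  have hX₁_B : ∀ x ∈ X₁.support, x ∈ B → x = b := fun x hx => hX_B x (hX₁sub x hx)
  have hX₁_C : ∀ x ∈ X₁.support, x ∉ C := fun x hx => hX_C x (hX₁sub x hx)
  have hzC : z ∉ C := hX₁_C z hzX₁
  have hzB : z ∉ B := hY_B z hzY
  -- split Y at z
  set stem := Y.takeUntil z hzY with hstemdef
  set Y₁ := Y.dropUntil z hzY with hY₁def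
  have hstempath : stem.IsPath := hYpath.takeUntil hzY
  have hY₁path : Y₁.IsPath := hYpath.dropUntil hzY
  have htd := takeUntil_dropUntil_inter hYpath hzY
  have hstemsub : ∀ x ∈ stem.support, x ∈ Y.support :=
    fun x hx => Y.support_takeUntil_subset hzY hx
  have hY₁sub : ∀ x ∈ Y₁.support, x ∈ Y.support :=
    fun x hx => Y.support_dropUntil_subset hzY hx
  have hY₁_C : ∀ x ∈ Y₁.support, x ∈ C → x = c := fun x hx => hY_C x (hY₁sub x hx)
  have hY₁_B : ∀ x ∈ Y₁.support, x ∉ B := fun x hx => hY_B x (hY₁sub x hx)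
  -- inner subdivision copies
  obtain ⟨c₂', s₂', hs₂path, hs₂int⟩ := IH (G.induce B) hB ⟨b, hbB⟩
  obtain ⟨c₃', s₃', hs₃path, hs₃int⟩ := IH (G.induce C) hC ⟨c, hcC⟩
  let embB := (SimpleGraph.Embedding.induce B : G.induce B ↪g G)
  let embC := (SimpleGraph.Embedding.induce C : G.induce C ↪g G)
  let K₂ := SubdivCopy.mapEmb embB c₂'
  let K₃ := SubdivCopy.mapEmb embC c₃'
  let S₂ : G.Walk b (K₂.φ (CBTroot h)) := s₂'.map embB.toHom
  let S₃ : G.Walk c (K₃.φ (CBTroot h)) := s₃'.map embC.toHom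
  have hS₂path : S₂.IsPath := SimpleGraph.Walk.map_isPath_of_injective embB.injective hs₂path
  have hS₃path : S₃.IsPath := SimpleGraph.Walk.map_isPath_of_injective embC.injective hs₃path
  have hS₂B : ∀ x ∈ S₂.support, x ∈ B := by
    intro x hx
    replace hx : x ∈ (s₂'.map embB.toHom).support := hx
    rw [SimpleGraph.Walk.support_map] at hx
    obtain ⟨y, _, hy⟩ := List.mem_map.mp hx
    exact hy ▸ y.2
  have hS₃C : ∀ x ∈ S₃.support, x ∈ C := by
    intro x hx
    replace hx : x ∈ (s₃'.map embC.toHom).support := hx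
    rw [SimpleGraph.Walk.support_map] at hx
    obtain ⟨y, _, hy⟩ := List.mem_map.mp hx
    exact hy ▸ y.2
  have hsupp₂B : ∀ x ∈ K₂.supp, x ∈ B := by
    intro x hx
    rw [show K₂ = SubdivCopy.mapEmb embB c₂' from rfl, SubdivCopy.supp_mapEmb] at hx
    obtain ⟨y, _, hy⟩ := hx
    exact hy ▸ y.2
  have hsupp₃C : ∀ x ∈ K₃.supp, x ∈ C := by
    intro x hx
    rw [show K₃ = SubdivCopy.mapEmb embC c₃' from rfl, SubdivCopy.supp_mapEmb] at hx
    obtain ⟨y, _, hy⟩ := hx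
    exact hy ▸ y.2
  have hS₂int : ∀ x ∈ S₂.support, x ∈ K₂.supp → x = K₂.φ (CBTroot h) := by
    intro x hx hxs
    replace hx : x ∈ (s₂'.map embB.toHom).support := hx
    rw [SimpleGraph.Walk.support_map] at hx
    obtain ⟨y, hy, hyx⟩ := List.mem_map.mp hx
    rw [show K₂ = SubdivCopy.mapEmb embB c₂' from rfl, SubdivCopy.supp_mapEmb] at hxs
    obtain ⟨y', hy', hy'x⟩ := hxs
    have hyy : y' = y := embB.injective (by rw [hy'x]; exact hyx.symm)
    subst hyy
    have := hs₂int y' hy hy'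
    rw [← hyx, this]
    rfl
  have hS₃int : ∀ x ∈ S₃.support, x ∈ K₃.supp → x = K₃.φ (CBTroot h) := by
    intro x hx hxs
    replace hx : x ∈ (s₃'.map embC.toHom).support := hx
    rw [SimpleGraph.Walk.support_map] at hx
    obtain ⟨y, hy, hyx⟩ := List.mem_map.mp hx
    rw [show K₃ = SubdivCopy.mapEmb embC c₃' from rfl, SubdivCopy.supp_mapEmb] at hxs
    obtain ⟨y', hy', hy'x⟩ := hxs
    have hyy : y' = y := embC.injective (by rw [hy'x]; exact hyx.symm)
    subst hyy
    have := hs₃int y' hy hy'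
    rw [← hyx, this]
    rfl
  -- the assembled structure
  let c' : Bool → SubdivCopy (CBT h) G := fun d => match d with
    | false => K₂
    | true => K₃
  let π : (d : Bool) → G.Walk z ((c' d).φ (CBTroot h)) := fun d => match d with
    | false => X₁.append S₂
    | true => Y₁.append S₃
  have hπ2path : (X₁.append S₂).IsPath :=
    IsPath.append_of_inter hX₁path hS₂path (fun x hx hx2 => hX₁_B x hx (hS₂B x hx2))
  have hπ3path : (Y₁.append S₃).IsPath :=
    IsPath.append_of_inter hY₁path hS₃path (fun x hx hx2 => hY₁_C x hx (hS₃C x hx2))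
  have hCore : ∀ x ∈ (X₁.append S₂).support, x ∈ (Y₁.append S₃).support → x = z := by
    intro x hx hy
    rw [SimpleGraph.Walk.mem_support_append_iff] at hx hy
    rcases hx with hx | hx <;> rcases hy with hy | hy
    · exact hX₁Y x hx (hY₁sub x hy)
    · exact absurd (hS₃C x hy) (hX₁_C x hx)
    · exact absurd (hS₂B x hx) (hY₁_B x hy)
    · exact absurd (hS₃C x hy) (Set.disjoint_left.mp hBC (hS₂B x hx))
  obtain ⟨cN, hroot, hsuppN⟩ := assemble c' z π
    (by
      intro d
      cases d
      · exact hπ2path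
      · exact hπ3path)
    (by
      intro d x hx hxs
      cases d
      · replace hx : x ∈ (X₁.append S₂).support := hx
        replace hxs : x ∈ K₂.supp := hxs
        show x = K₂.φ (CBTroot h)
        rw [SimpleGraph.Walk.mem_support_append_iff] at hx
        rcases hx with hx | hx
        · have hxb := hX₁_B x hx (hsupp₂B x hxs)
          subst hxb
          exact hS₂int x S₂.start_mem_support hxs
        · exact hS₂int x hx hxs
      · replace hx : x ∈ (Y₁.append S₃).support := hx
        replace hxs : x ∈ K₃.supp := hxs
        show x = K₃.φ (CBTroot h)
        rw [SimpleGraph.Walk.mem_support_append_iff] at hx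
        rcases hx with hx | hx
        · have hxc := hY₁_C x hx (hsupp₃C x hxs)
          subst hxc
          exact hS₃int x S₃.start_mem_support hxs
        · exact hS₃int x hx hxs)
    (by
      intro d d' hdd x hx hx'
      cases d <;> cases d'
      · exact absurd rfl hdd
      · exact hCore x hx hx'
      · exact hCore x hx' hx
      · exact absurd rfl hdd)
    (by
      intro d d' hdd x hx hxs
      cases d <;> cases d'
      · exact absurd rfl hdd
      · replace hx : x ∈ (X₁.append S₂).support := hx
        replace hxs : x ∈ K₃.supp := hxs
        rw [SimpleGraph.Walk.mem_support_append_iff] at hx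
        rcases hx with hx | hx
        · exact hX₁_C x hx (hsupp₃C x hxs)
        · exact Set.disjoint_left.mp hBC (hS₂B x hx) (hsupp₃C x hxs)
      · replace hx : x ∈ (Y₁.append S₃).support := hx
        replace hxs : x ∈ K₂.supp := hxs
        rw [SimpleGraph.Walk.mem_support_append_iff] at hx
        rcases hx with hx | hx
        · exact hY₁_B x hx (hsupp₂B x hxs)
        · exact Set.disjoint_left.mp hBC (hsupp₂B x hxs) (hS₃C x hx)
      · exact absurd rfl hdd)
    (by
      intro d d' hdd x hx hxs
      cases d <;> cases d'
      · exact absurd rfl hdd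
      · exact Set.disjoint_left.mp hBC (hsupp₂B x hx) (hsupp₃C x hxs)
      · exact Set.disjoint_left.mp hBC (hsupp₂B x hxs) (hsupp₃C x hx)
      · exact absurd rfl hdd)
    (by
      intro d
      cases d
      · exact fun hz => hzB (hsupp₂B z hz)
      · exact fun hz => hzC (hsupp₃C z hz))
  refine ⟨cN, stem.copy rfl hroot.symm, ?_, ?_⟩
  · exact (SimpleGraph.Walk.isPath_copy _ _ _).mpr hstempath
  · intro x hx hxs
    rw [SimpleGraph.Walk.support_copy] at hx
    rw [hroot]
    rcases hsuppN x hxs with hc | hc | hc | hc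
    · replace hc : x ∈ (X₁.append S₂).support := hc
      rw [SimpleGraph.Walk.mem_support_append_iff] at hc
      rcases hc with hc | hc
      · exact hX₁Y x hc (hstemsub x hx)
      · exact absurd (hS₂B x hc) (hY_B x (hstemsub x hx))
    · replace hc : x ∈ (Y₁.append S₃).support := hc
      rw [SimpleGraph.Walk.mem_support_append_iff] at hc
      rcases hc with hc | hc
      · exact htd x hx hc
      · have hxc := hY_C x (hstemsub x hx) (hS₃C x hc)
        subst hxc
        have hcz := htd x hx Y₁.end_mem_support
        exact absurd (hcz ▸ hcC) hzC
    · exact absurd (hsupp₂B x hc) (hY_B x (hstemsub x hx))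
    · have hxc := hY_C x (hstemsub x hx) (hsupp₃C x hc)
      subst hxc
      have hcz := htd x hx Y₁.end_mem_support
      exact absurd (hcz ▸ hcC) hzC


lemma STR : ∀ (h : ℕ) {V : Type} (G : SimpleGraph V), InT h G → ∀ u : V,
    ∃ c : SubdivCopy (CBT h) G, ∃ p : G.Walk u (c.φ (CBTroot h)), p.IsPath ∧
      ∀ x ∈ p.support, x ∈ c.supp → x = c.φ (CBTroot h) := by
  intro h
  induction h with
  | zero =>
    intro V G hG u
    refine ⟨⟨fun _ => u, fun a b _ => vh_zero_eq a b,
      fun {x y} hxy => (cbt_zero_not_adj hxy).elim,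
      fun {x y} hxy => (cbt_zero_not_adj hxy).elim,
      fun {x y} hxy => (cbt_zero_not_adj hxy).elim,
      fun {x y x' y'} hxy => (cbt_zero_not_adj hxy).elim⟩,
      SimpleGraph.Walk.nil, SimpleGraph.Walk.IsPath.nil, ?_⟩
    intro x hx _
    simpa using hx
  | succ h ih =>
    intro V G hG u
    classical
    obtain ⟨hconn, V₁, V₂, V₃, d12, d13, d23, m1, m2, m3, L12, L13, L23⟩ := hG
    obtain ⟨⟨t, htV⟩⟩ := (InT_connected (h := h) (G := G.induce V₁) m1).nonempty
    obtain ⟨W0⟩ := hconn.preconnected u t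
    obtain ⟨w, hwS, q0, _, hq0⟩ := exists_firstHit (S := V₁ ∪ V₂ ∪ V₃) W0
      (Or.inl (Or.inl htV))
    have hP₀ : ∀ x ∈ q0.bypass.support, x ∈ V₁ ∪ V₂ ∪ V₃ → x = w :=
      fun x hx => hq0 x (q0.support_bypass_subset hx)
    rcases hwS with (hw | hw) | hw
    · exact step (fun {W} H hH u' => ih H hH u') V₁ V₂ V₃ d12 d13 d23 m1 m2 m3 L12 L13
        u w hw q0.bypass hP₀
    · refine step (fun {W} H hH u' => ih H hH u') V₂ V₁ V₃ d12.symm d23 d13 m2 m1 m3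
        (LinkedAvoiding.symmAB L12) L23 u w hw q0.bypass ?_
      intro x hx hmem
      refine hP₀ x hx ?_
      rcases hmem with (hm | hm) | hm
      exacts [Or.inl (Or.inr hm), Or.inl (Or.inl hm), Or.inr hm]
    · refine step (fun {W} H hH u' => ih H hH u') V₃ V₁ V₂ d13.symm d23.symm d12 m3 m1 m2
        (LinkedAvoiding.symmAB L13) (LinkedAvoiding.symmAB L23) u w hw q0.bypass ?_
      intro x hx hmem
      refine hP₀ x hx ?_
      rcases hmem with (hm | hm) | hm
      exacts [Or.inr hm, Or.inl (Or.inl hm), Or.inl (Or.inr hm)]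

end CBTProof


theorem stmt2 {V : Type} (G : SimpleGraph V) (h : ℕ) (hG : InT h G) :
    ContainsSubdiv (CBT h) G := by
  obtain ⟨u⟩ := (CBTProof.InT_connected hG).nonempty
  obtain ⟨c, p, hp, hint⟩ := CBTProof.STR h G hG u
  exact ⟨c⟩
end

section
/- For every graph G in T_h and every vertex v of G, there exist a subdivision S of a complete binary tree of height h contained in G with root r, and a path P in G from v to r such that V(P) ∩ V(S) = {r}. -/
open SimpleGraph

variable {V : Type} {G : SimpleGraph V}

lemma firstHitWalkAux (S : Set V) {a b : V} (w : G.Walk a b) (hb : b ∈ S) :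
    ∃ z ∈ S, ∃ q : G.Walk a z, (∀ x ∈ q.support, x ∈ S → x = z) ∧
      (∀ x ∈ q.support, x ∈ w.support) := by
  induction w with
  | nil => exact ⟨_, hb, Walk.nil, by simp, by simp⟩
  | @cons u v c h w ih =>
    by_cases ha : u ∈ S
    · refine ⟨u, ha, Walk.nil, by simp, by simp⟩
    · obtain ⟨z, hz, q, hq1, hq2⟩ := ih hb
      refine ⟨z, hz, Walk.cons h q, ?_, ?_⟩
      · intro x hx hxS
        rw [Walk.support_cons, List.mem_cons] at hx
        rcases hx with rfl | hx'
        · exact absurd hxS ha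
        · exact hq1 x hx' hxS
      · intro x hx
        rw [Walk.support_cons, List.mem_cons] at hx
        rw [Walk.support_cons, List.mem_cons]
        rcases hx with rfl | hx'
        · exact Or.inl rfl
        · exact Or.inr (hq2 x hx')

lemma firstHit (S : Set V) {a b : V} (w : G.Walk a b) (hb : b ∈ S) :
    ∃ z ∈ S, ∃ q : G.Walk a z, q.IsPath ∧ (∀ x ∈ q.support, x ∈ S → x = z) ∧
      (∀ x ∈ q.support, x ∈ w.support) := by
  haveI := Classical.decEq V
  obtain ⟨z, hz, q, hq1, hq2⟩ := firstHitWalkAux S w hb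
  exact ⟨z, hz, q.bypass, q.bypass_isPath,
    fun x hx hxS => hq1 x (q.support_bypass_subset hx) hxS,
    fun x hx => hq2 x (q.support_bypass_subset hx)⟩

lemma appendIsPath {a b c : V} {p : G.Walk a b} {q : G.Walk b c}
    (hp : p.IsPath) (hq : q.IsPath) (h : ∀ x ∈ p.support, x ∈ q.support → x = b) :
    (p.append q).IsPath := by
  have hq' : q.support = b :: q.support.tail := q.support_eq_cons
  have hqn : q.support.Nodup := hq.support_nodup
  rw [hq'] at hqn
  rw [Walk.isPath_def, Walk.support_append, List.nodup_append]
  refine ⟨hp.support_nodup, (List.nodup_cons.mp hqn).2, ?_⟩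
  intro x hxp y hxq rfl
  have hxq' : x ∈ q.support := by rw [hq']; exact List.mem_cons_of_mem _ hxq
  have := h x hxp hxq'
  subst this
  exact (List.nodup_cons.mp hqn).1 hxq

/-- Splitting a path at a vertex: the two halves meet only at the split vertex. -/
lemma takeUntil_dropUntil_inter {a b u : V} {p : G.Walk a b} (hp : p.IsPath)
    (hu : u ∈ p.support) [DecidableEq V] :
    ∀ x, x ∈ (p.takeUntil u hu).support → x ∈ (p.dropUntil u hu).support → x = u := by
  intro x hx1 hx2
  have hspec := p.take_spec hu
  have : p.support = (p.takeUntil u hu).support ++ (p.dropUntil u hu).support.tail := by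
    rw [← Walk.support_append, hspec]
  have hnd := hp.support_nodup
  rw [this, List.nodup_append] at hnd
  have hd : (p.dropUntil u hu).support = u :: (p.dropUntil u hu).support.tail :=
    (p.dropUntil u hu).support_eq_cons
  rw [hd, List.mem_cons] at hx2
  rcases hx2 with rfl | hx2
  · rfl
  · exact absurd rfl (hnd.2.2 x hx1 x hx2)
section Infra2
variable {V : Type} {G : SimpleGraph V}

/-- Push a subdivision copy through an injective graph homomorphism. -/
def SubdivCopy.mapInj {α : Type} {W : Type} {T : SimpleGraph α} {G' : SimpleGraph W}
    (f : G →g G') (hf : Function.Injective f) (c : SubdivCopy T G) : SubdivCopy T G' where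
  φ := f ∘ c.φ
  inj := hf.comp c.inj
  path := fun {x y} h => (c.path h).map f
  isPath := fun {x y} h => Walk.map_isPath_of_injective hf (c.isPath h)
  branch := fun {x y} h z hz => by
    rw [Walk.support_map] at hz
    obtain ⟨u, hu, he⟩ := List.mem_map.mp hz
    have : u = c.φ z := hf he
    subst this
    exact c.branch h z hu
  disj := fun {x y x' y'} h h' hne v hv hv' => by
    rw [Walk.support_map] at hv hv'
    obtain ⟨u, hu, rfl⟩ := List.mem_map.mp hv
    obtain ⟨u', hu', he⟩ := List.mem_map.mp hv'
    have : u' = u := hf he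
    subst this
    obtain ⟨a, ha, rfl⟩ := c.disj h h' hne u' hu hu'
    exact ⟨a, ha, rfl⟩

lemma SubdivCopy.supp_mapInj {α : Type} {W : Type} {T : SimpleGraph α} {G' : SimpleGraph W}
    (f : G →g G') (hf : Function.Injective f) (c : SubdivCopy T G) :
    (c.mapInj f hf).supp = f '' c.supp := by
  unfold SubdivCopy.supp SubdivCopy.mapInj
  ext w
  simp only [Set.mem_union, Set.mem_image, Set.mem_setOf_eq, Set.mem_range]
  constructor
  · rintro (⟨x, rfl⟩ | ⟨x, y, h, hw⟩)
    · exact ⟨c.φ x, Or.inl ⟨x, rfl⟩, rfl⟩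
    · rw [Walk.support_map] at hw
      obtain ⟨u, hu, rfl⟩ := List.mem_map.mp hw
      exact ⟨u, Or.inr ⟨x, y, h, hu⟩, rfl⟩
  · rintro ⟨u, (⟨x, rfl⟩ | ⟨x, y, h, hu⟩), rfl⟩
    · exact Or.inl ⟨x, rfl⟩
    · refine Or.inr ⟨x, y, h, ?_⟩
      rw [Walk.support_map]
      exact List.mem_map.mpr ⟨u, hu, rfl⟩

lemma InT.connected {h : ℕ} (hG : InT h G) : G.Connected := by
  cases h with
  | zero => exact hG
  | succ h => exact hG.1

lemma LinkedAvoiding.symm2 {A B C : Set V} (h : LinkedAvoiding G A B C) :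
    LinkedAvoiding G B A C := by
  obtain ⟨a, ha, b, hb, p, hp⟩ := h
  exact ⟨b, hb, a, ha, p.reverse, fun x hx => hp x (by rwa [Walk.support_reverse, List.mem_reverse] at hx)⟩

/-- The vertex-inclusion hom of an induced subgraph. -/
def inducedHom (S : Set V) : G.induce S →g G := (SimpleGraph.Embedding.induce S).toHom

lemma inducedHom_inj (S : Set V) : Function.Injective (inducedHom (G := G) S) :=
  fun a b hab => Subtype.ext hab

lemma inducedHom_val (S : Set V) (x : S) : inducedHom (G := G) S x = (x : V) := rfl


/-- A tripod in a connected induced subgraph. -/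
lemma tripod (B : Set V) (hconn : (G.induce B).Connected)
    {u₁ u₂ u₃ : V} (h1 : u₁ ∈ B) (h2 : u₂ ∈ B) (h3 : u₃ ∈ B) :
    ∃ m, m ∈ B ∧ ∃ (L1 : G.Walk m u₁) (L2 : G.Walk m u₂) (L3 : G.Walk m u₃),
      L1.IsPath ∧ L2.IsPath ∧ L3.IsPath ∧
      (∀ x ∈ L1.support, x ∈ B) ∧ (∀ x ∈ L2.support, x ∈ B) ∧ (∀ x ∈ L3.support, x ∈ B) ∧
      (∀ x, x ∈ L1.support → x ∈ L2.support → x = m) ∧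
      (∀ x, x ∈ L1.support → x ∈ L3.support → x = m) ∧
      (∀ x, x ∈ L2.support → x ∈ L3.support → x = m) := by
  haveI := Classical.decEq V
  haveI : DecidableEq B := fun a b => Classical.dec _
  obtain ⟨ω⟩ := hconn ⟨u₁, h1⟩ ⟨u₂, h2⟩
  set π := ω.bypass with hπ
  have hπp : π.IsPath := ω.bypass_isPath
  obtain ⟨ω₃⟩ := hconn ⟨u₃, h3⟩ ⟨u₁, h1⟩
  obtain ⟨m', hm', q, hq, hq1, hq2⟩ := firstHit {x | x ∈ π.support} ω₃ (by simp)
  have hm'' : m' ∈ π.support := hm'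
  set T := π.takeUntil m' hm'' with hT
  set D := π.dropUntil m' hm'' with hD
  have hTD := takeUntil_dropUntil_inter hπp hm''
  have hTsub : T.support ⊆ π.support := π.support_takeUntil_subset hm''
  have hDsub : D.support ⊆ π.support := π.support_dropUntil_subset hm''
  -- map everything to G
  refine ⟨(m' : V), m'.2, (T.reverse.map (inducedHom B)).copy rfl rfl,
    (D.map (inducedHom B)).copy rfl rfl, (q.reverse.map (inducedHom B)).copy rfl rfl,
    ?_, ?_, ?_, ?_, ?_, ?_, ?_, ?_, ?_⟩
  · exact Walk.map_isPath_of_injective (inducedHom_inj B) (hπp.takeUntil hm'').reverse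
  · exact Walk.map_isPath_of_injective (inducedHom_inj B) (hπp.dropUntil hm'')
  · exact Walk.map_isPath_of_injective (inducedHom_inj B) hq.reverse
  all_goals
    erw [Walk.support_copy]; repeat erw [Walk.support_copy]
    simp only [Walk.support_copy, Walk.support_map, Walk.support_reverse, List.mem_reverse]
  · rintro x hx
    obtain ⟨u, hu, rfl⟩ := List.mem_map.mp hx
    exact u.2
  · rintro x hx
    obtain ⟨u, hu, rfl⟩ := List.mem_map.mp hx
    exact u.2
  · rintro x hx
    obtain ⟨u, hu, rfl⟩ := List.mem_map.mp hx
    exact u.2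
  · intro x hx1 hx2
    obtain ⟨u, hu, rfl⟩ := List.mem_map.mp hx1
    obtain ⟨u', hu', he⟩ := List.mem_map.mp hx2
    have : u' = u := Subtype.ext he
    subst this
    rw [List.mem_reverse] at hu
    have := hTD u' hu hu'
    rw [this]; rfl
  · intro x hx1 hx2
    obtain ⟨u, hu, rfl⟩ := List.mem_map.mp hx1
    obtain ⟨u', hu', he⟩ := List.mem_map.mp hx2
    have : u' = u := Subtype.ext he
    subst this
    rw [List.mem_reverse] at hu hu'
    have := hq1 u' hu' (hTsub hu)
    rw [this]; rfl
  · intro x hx1 hx2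
    obtain ⟨u, hu, rfl⟩ := List.mem_map.mp hx1
    obtain ⟨u', hu', he⟩ := List.mem_map.mp hx2
    have : u' = u := Subtype.ext he
    subst this
    rw [List.mem_reverse] at hu'
    have := hq1 u' hu' (hDsub hu)
    rw [this]; rfl

end Infra2
section CBTGlue

variable {h : ℕ}

/-- Embedding of the height-`h` binary tree as the `b`-subtree of height `h+1`. -/
def embV (b : Bool) (x : {l : List Bool // l.length ≤ h}) : {l : List Bool // l.length ≤ h + 1} :=
  ⟨x.val ++ [b], by simpa using Nat.succ_le_succ x.2⟩

lemma embV_val (b : Bool) (x : {l : List Bool // l.length ≤ h}) :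
    (embV b x).val = x.val ++ [b] := rfl

lemma embV_ne_root (b : Bool) (x : {l : List Bool // l.length ≤ h}) :
    embV b x ≠ CBTroot (h + 1) := by
  intro he
  have : (embV b x).val = [] := congrArg Subtype.val he
  simp [embV_val] at this

lemma embV_eq_iff {b b' : Bool} {x x' : {l : List Bool // l.length ≤ h}} :
    embV b x = embV b' x' ↔ b = b' ∧ x = x' := by
  constructor
  · intro he
    have hv : x.val ++ [b] = x'.val ++ [b'] := congrArg Subtype.val he
    have := List.append_inj' hv (by rfl)
    exact ⟨by simpa using this.2, Subtype.ext this.1⟩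
  · rintro ⟨rfl, rfl⟩; rfl

lemma cbt_adj_cons {k : ℕ} (u w : {l : List Bool // l.length ≤ k}) (cc : Bool)
    (hw : w.val = cc :: u.val) : (CBT k).Adj u w := by
  rw [CBT, fromRel_adj]
  refine ⟨?_, Or.inl ⟨cc, hw⟩⟩
  intro he
  rw [he] at hw
  have := congrArg List.length hw
  simp at this

lemma cbt_adj_iff {k : ℕ} (u w : {l : List Bool // l.length ≤ k}) :
    (CBT k).Adj u w ↔ u ≠ w ∧ ((∃ cc, w.val = cc :: u.val) ∨ ∃ cc, u.val = cc :: w.val) := by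
  rw [CBT, fromRel_adj]

lemma adj_embV {b : Bool} {x y : {l : List Bool // l.length ≤ h}}
    (hxy : (CBT h).Adj x y) : (CBT (h + 1)).Adj (embV b x) (embV b y) := by
  rw [cbt_adj_iff] at hxy ⊢
  obtain ⟨hne, hrel⟩ := hxy
  refine ⟨fun he => hne (embV_eq_iff.mp he).2, ?_⟩
  rcases hrel with ⟨cc, hc⟩ | ⟨cc, hc⟩
  · exact Or.inl ⟨cc, by simp [embV_val, hc]⟩
  · exact Or.inr ⟨cc, by simp [embV_val, hc]⟩

lemma adj_root (b : Bool) : (CBT (h + 1)).Adj (CBTroot (h + 1)) (embV b (CBTroot h)) := by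
  apply cbt_adj_cons
  rfl

/-- classification of the vertices of `CBT (h+1)`. -/
lemma vert_cases (z : {l : List Bool // l.length ≤ h + 1}) :
    z = CBTroot (h + 1) ∨ ∃ b x, z = embV b x := by
  by_cases hz : z.val = []
  · exact Or.inl (Subtype.ext hz)
  · refine Or.inr ⟨z.val.getLast hz, ⟨z.val.dropLast, ?_⟩, ?_⟩
    · rw [List.length_dropLast]
      have h2 := z.2
      omega
    · apply Subtype.ext
      rw [embV_val]
      exact (List.dropLast_append_getLast hz).symm

/-- classification of the edges of `CBT (h+1)`. -/
lemma edge_cases {x y : {l : List Bool // l.length ≤ h + 1}} (hxy : (CBT (h + 1)).Adj x y) :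
    (∃ b, (x = CBTroot (h + 1) ∧ y = embV b (CBTroot h)) ∨
          (y = CBTroot (h + 1) ∧ x = embV b (CBTroot h))) ∨
    (∃ b u w, (CBT h).Adj u w ∧ x = embV b u ∧ y = embV b w) := by
  rw [cbt_adj_iff] at hxy
  obtain ⟨hne, hrel⟩ := hxy
  have key : ∀ (p q : {l : List Bool // l.length ≤ h + 1}) (cc : Bool), q.val = cc :: p.val →
      (∃ b, p = CBTroot (h + 1) ∧ q = embV b (CBTroot h)) ∨
      (∃ b u w, (CBT h).Adj u w ∧ p = embV b u ∧ q = embV b w) := by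
    intro p q cc hc
    by_cases hp : p.val = []
    · refine Or.inl ⟨cc, Subtype.ext hp, Subtype.ext ?_⟩
      rw [hc, hp]; rfl
    · have hplen : p.val.dropLast.length = p.val.length - 1 := by simp
      have hple : p.val.length ≤ h := by
        have := q.2
        rw [hc] at this
        simpa using this
      have hu1 : p.val.dropLast.length ≤ h := by rw [List.length_dropLast]; exact le_trans (Nat.sub_le _ _) hple
      have hu2 : (cc :: p.val.dropLast).length ≤ h := by
        rw [List.length_cons, List.length_dropLast]
        calc p.val.length - 1 + 1 ≤ p.val.length := by
              have : 1 ≤ p.val.length := List.length_pos_iff.mpr hp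
              omega
          _ ≤ h := hple
      refine Or.inr ⟨p.val.getLast hp, ⟨p.val.dropLast, hu1⟩, ⟨cc :: p.val.dropLast, hu2⟩,
        ?_, ?_, ?_⟩
      · exact cbt_adj_cons _ _ cc rfl
      · exact Subtype.ext (List.dropLast_append_getLast hp).symm
      · apply Subtype.ext
        rw [embV_val, hc]
        show cc :: p.val = cc :: (p.val.dropLast ++ [p.val.getLast hp])
        rw [List.dropLast_append_getLast hp]
  rcases hrel with ⟨cc, hc⟩ | ⟨cc, hc⟩
  · rcases key x y cc hc with ⟨b, h1, h2⟩ | ⟨b, u, w, ha, h1, h2⟩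
    · exact Or.inl ⟨b, Or.inl ⟨h1, h2⟩⟩
    · exact Or.inr ⟨b, u, w, ha, h1, h2⟩
  · rcases key y x cc hc with ⟨b, h1, h2⟩ | ⟨b, u, w, ha, h1, h2⟩
    · exact Or.inl ⟨b, Or.inr ⟨h1, h2⟩⟩
    · exact Or.inr ⟨b, w, u, ha.symm, h2, h1⟩

end CBTGlue
section Glue
variable {V : Type} {G : SimpleGraph V} {h : ℕ}
variable (c : Bool → SubdivCopy (CBT h) G) (r : V)

/-- The branch-vertex map of the glued copy. -/
def glueφ : {l : List Bool // l.length ≤ h + 1} → V := fun z =>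
  if hz : z.val = [] then r
  else (c (z.val.getLast hz)).φ
    ⟨z.val.dropLast, by rw [List.length_dropLast]; exact Nat.sub_le_of_le_add z.2⟩

lemma glueφ_root : glueφ c r (CBTroot (h + 1)) = r := rfl

lemma glueφ_emb (b : Bool) (x : {l : List Bool // l.length ≤ h}) :
    glueφ c r (embV b x) = (c b).φ x := by
  have hne : (embV b x).val ≠ [] := by simp [embV_val]
  rw [glueφ, dif_neg hne]
  rcases x with ⟨lx, hlx⟩
  simp only [embV_val]
  congr 1 <;> simp [List.getLast_append]

lemma glueφ_nil {z : {l : List Bool // l.length ≤ h + 1}} (hz : z.val = []) :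
    glueφ c r z = r := by rw [glueφ, dif_pos hz]

lemma glueφ_of_val {z : {l : List Bool // l.length ≤ h + 1}} {b : Bool}
    (hz : z.val = [b]) : glueφ c r z = (c b).φ (CBTroot h) := by
  have : z = embV b (CBTroot h) := Subtype.ext (by rw [hz]; rfl)
  rw [this, glueφ_emb]

lemma glueφ_of_emb {z : {l : List Bool // l.length ≤ h + 1}} {b : Bool}
    {u : {l : List Bool // l.length ≤ h}} (hz : z = embV b u) :
    glueφ c r z = (c b).φ u := by rw [hz, glueφ_emb]

lemma pair_congr {α : Type*} {p q a b : α} (h1 : p = a) (h2 : q = b) :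
    ({p, q} : Set α) = {a, b} := by rw [h1, h2]

variable (Bp : ∀ b : Bool, G.Walk r ((c b).φ (CBTroot h)))

lemma half_data {x y : {l : List Bool // l.length ≤ h + 1}}
    (h1 : ∃ cc, y.val = cc :: x.val) (h0 : ¬ x.val = []) :
    ∃ b u w, ∃ _ : (CBT h).Adj u w, x = embV b u ∧ y = embV b w := by
  obtain ⟨cc, hcc⟩ := h1
  have hxle : x.val.length ≤ h := by
    have := y.2; rw [hcc] at this; simpa using this
  have hu1 : x.val.dropLast.length ≤ h := by
    rw [List.length_dropLast]; exact le_trans (Nat.sub_le _ _) hxle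
  have hu2 : (cc :: x.val.dropLast).length ≤ h := by
    rw [List.length_cons, List.length_dropLast]
    have : 1 ≤ x.val.length := List.length_pos_iff.mpr h0
    omega
  refine ⟨x.val.getLast h0, ⟨x.val.dropLast, hu1⟩, ⟨cc :: x.val.dropLast, hu2⟩,
    cbt_adj_cons _ _ cc rfl, ?_, ?_⟩
  · exact Subtype.ext (List.dropLast_append_getLast h0).symm
  · apply Subtype.ext
    rw [embV_val, hcc]
    show cc :: x.val = cc :: (x.val.dropLast ++ [x.val.getLast h0])
    rw [List.dropLast_append_getLast h0]

/-- One oriented half of the glued path assignment. -/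
noncomputable def glueHalf (x y : {l : List Bool // l.length ≤ h + 1})
    (h1 : ∃ cc, y.val = cc :: x.val) : G.Walk (glueφ c r x) (glueφ c r y) :=
  if h0 : x.val = [] then
    (Bp h1.choose).copy
      (glueφ_nil c r h0).symm
      ((glueφ_of_val c r (h1.choose_spec.trans (congrArg (h1.choose :: ·) h0))).symm)
  else
    ((c (half_data h1 h0).choose).path (half_data h1 h0).choose_spec.choose_spec.choose_spec.choose)
      |>.copy
      ((glueφ_of_emb c r (half_data h1 h0).choose_spec.choose_spec.choose_spec.choose_spec.1).symm)
      ((glueφ_of_emb c r (half_data h1 h0).choose_spec.choose_spec.choose_spec.choose_spec.2).symm)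

lemma adj_resolve {x y : {l : List Bool // l.length ≤ h + 1}} (hxy : (CBT (h + 1)).Adj x y)
    (h1 : ¬ ∃ cc, y.val = cc :: x.val) : ∃ cc, x.val = cc :: y.val := by
  rw [cbt_adj_iff] at hxy
  tauto

/-- The path assignment of the glued copy. -/
noncomputable def gluePath : ∀ {x y : {l : List Bool // l.length ≤ h + 1}},
    (CBT (h + 1)).Adj x y → G.Walk (glueφ c r x) (glueφ c r y) := fun {x y} hxy =>
  if h1 : ∃ cc, y.val = cc :: x.val then glueHalf c r Bp x y h1
  else (glueHalf c r Bp y x (adj_resolve hxy h1)).reverse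

/-- Characterisation of the glued paths. -/
lemma gluePath_spec {x y : {l : List Bool // l.length ≤ h + 1}}
    (hxy : (CBT (h + 1)).Adj x y) :
    (∃ b, ({x, y} : Set {l : List Bool // l.length ≤ h + 1})
        = {CBTroot (h + 1), embV b (CBTroot h)} ∧
       ∀ v', v' ∈ (gluePath c r Bp hxy).support ↔ v' ∈ (Bp b).support) ∨
    (∃ b u w, ∃ e : (CBT h).Adj u w,
       ({x, y} : Set {l : List Bool // l.length ≤ h + 1}) = {embV b u, embV b w} ∧
       ∀ v', v' ∈ (gluePath c r Bp hxy).support ↔ v' ∈ ((c b).path e).support) := by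
  have key : ∀ (p q : {l : List Bool // l.length ≤ h + 1}) (h1 : ∃ cc, q.val = cc :: p.val),
      (∃ b, ({p, q} : Set {l : List Bool // l.length ≤ h + 1})
          = {CBTroot (h + 1), embV b (CBTroot h)} ∧
         ∀ v', v' ∈ (glueHalf c r Bp p q h1).support ↔ v' ∈ (Bp b).support) ∨
      (∃ b u w, ∃ e : (CBT h).Adj u w,
         ({p, q} : Set {l : List Bool // l.length ≤ h + 1}) = {embV b u, embV b w} ∧
         ∀ v', v' ∈ (glueHalf c r Bp p q h1).support ↔ v' ∈ ((c b).path e).support) := by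
    intro p q h1
    by_cases h0 : p.val = []
    · left
      refine ⟨h1.choose, ?_, ?_⟩
      · exact pair_congr (Subtype.ext h0)
          (Subtype.ext (h1.choose_spec.trans (congrArg (h1.choose :: ·) h0)))
      · intro v'
        rw [glueHalf, dif_pos h0, Walk.support_copy]
    · right
      obtain ⟨hx, hy⟩ := (half_data h1 h0).choose_spec.choose_spec.choose_spec.choose_spec
      refine ⟨(half_data h1 h0).choose, _, _,
        (half_data h1 h0).choose_spec.choose_spec.choose_spec.choose, ?_, ?_⟩
      · exact pair_congr hx hy
      · intro v'
        rw [glueHalf, dif_neg h0, Walk.support_copy]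
  by_cases h1 : ∃ cc, y.val = cc :: x.val
  · have : gluePath c r Bp hxy = glueHalf c r Bp x y h1 := by rw [gluePath, dif_pos h1]
    rw [this]
    exact key x y h1
  · have : gluePath c r Bp hxy = (glueHalf c r Bp y x (adj_resolve hxy h1)).reverse := by
      rw [gluePath, dif_neg h1]
    rw [this]
    rcases key y x (adj_resolve hxy h1) with ⟨b, hpair, hsup⟩ | ⟨b, u, w, e, hpair, hsup⟩
    · left
      refine ⟨b, ?_, ?_⟩
      · rw [← hpair]; exact Set.pair_comm x y
      · intro v'; rw [Walk.support_reverse, List.mem_reverse]; exact hsup v'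
    · right
      refine ⟨b, u, w, e, ?_, ?_⟩
      · rw [← hpair]; exact Set.pair_comm x y
      · intro v'; rw [Walk.support_reverse, List.mem_reverse]; exact hsup v'

lemma gluePath_isPath (hBp : ∀ b, (Bp b).IsPath) {x y : {l : List Bool // l.length ≤ h + 1}}
    (hxy : (CBT (h + 1)).Adj x y) : (gluePath c r Bp hxy).IsPath := by
  have key : ∀ (p q : {l : List Bool // l.length ≤ h + 1}) (h1 : ∃ cc, q.val = cc :: p.val),
      (glueHalf c r Bp p q h1).IsPath := by
    intro p q h1
    by_cases h0 : p.val = []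
    · rw [glueHalf, dif_pos h0, Walk.isPath_copy]; exact hBp _
    · rw [glueHalf, dif_neg h0, Walk.isPath_copy]; exact (c _).isPath _
  by_cases h1 : ∃ cc, y.val = cc :: x.val
  · rw [gluePath, dif_pos h1]; exact key x y h1
  · rw [gluePath, dif_neg h1]; exact (key y x (adj_resolve hxy h1)).reverse

end Glue
section GlueMain
variable {V : Type} {G : SimpleGraph V} {h : ℕ}

lemma mem_supp_range {c : SubdivCopy (CBT h) G} (x : {l : List Bool // l.length ≤ h}) :
    c.φ x ∈ c.supp := Or.inl ⟨x, rfl⟩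

lemma mem_supp_path {c : SubdivCopy (CBT h) G} {u w : {l : List Bool // l.length ≤ h}}
    (e : (CBT h).Adj u w) {v : V} (hv : v ∈ (c.path e).support) : v ∈ c.supp :=
  Or.inr ⟨u, w, e, hv⟩

lemma glueMain (c : Bool → SubdivCopy (CBT h) G) (r : V)
    (Bp : ∀ b, G.Walk r ((c b).φ (CBTroot h)))
    (hBp : ∀ b, (Bp b).IsPath)
    (hBB : ∀ b b', b ≠ b' → ∀ x, x ∈ (Bp b).support → x ∈ (Bp b').support → x = r)
    (hBsame : ∀ b, ∀ x ∈ (Bp b).support, x ∈ (c b).supp → x = (c b).φ (CBTroot h))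
    (hBcross : ∀ b b', b ≠ b' → ∀ x, x ∈ (Bp b).support → x ∈ (c b').supp → False)
    (hcc : ∀ b b', b ≠ b' → ∀ x, x ∈ (c b).supp → x ∈ (c b').supp → False)
    (hr : ∀ b, r ∉ (c b).supp)
    {v : V} (W : G.Walk v r) (hWp : W.IsPath)
    (hW : ∀ x ∈ W.support, x ≠ r → ∀ b, x ∉ (Bp b).support ∧ x ∉ (c b).supp) :
    ∃ (C : SubdivCopy (CBT (h + 1)) G) (w : G.Walk v (C.φ (CBTroot (h + 1)))),
      w.IsPath ∧ ∀ u ∈ w.support, u ∈ C.supp → u = C.φ (CBTroot (h + 1)) := by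
  -- injectivity of glueφ
  have hinj : Function.Injective (glueφ c r) := by
    intro z₁ z₂ he
    rcases vert_cases z₁ with rfl | ⟨b₁, x₁, rfl⟩ <;>
      rcases vert_cases z₂ with rfl | ⟨b₂, x₂, rfl⟩
    · rfl
    · rw [glueφ_root, glueφ_emb] at he
      exact absurd (he ▸ mem_supp_range x₂) (hr b₂)
    · rw [glueφ_root, glueφ_emb] at he
      exact absurd (he ▸ mem_supp_range x₁) (hr b₁)
    · rw [glueφ_emb, glueφ_emb] at he
      by_cases hb : b₁ = b₂
      · subst hb
        rw [(c b₁).inj he]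
      · exact (hcc b₁ b₂ hb _ (he ▸ mem_supp_range x₁) (mem_supp_range x₂)).elim
  -- the glued copy
  refine ⟨⟨glueφ c r, hinj, fun {x y} hxy => gluePath c r Bp hxy,
    fun {x y} hxy => gluePath_isPath c r Bp hBp hxy, ?_, ?_⟩, ?_⟩
  · -- branch
    intro x y hxy z hz
    rcases gluePath_spec c r Bp hxy with ⟨b, hpair, hsup⟩ | ⟨b, u, w, e, hpair, hsup⟩
    · rw [hsup] at hz
      have hz' : z ∈ ({CBTroot (h + 1), embV b (CBTroot h)} :
          Set {l : List Bool // l.length ≤ h + 1}) := by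
        rcases vert_cases z with rfl | ⟨b', x', rfl⟩
        · exact Or.inl rfl
        · rw [glueφ_emb] at hz
          by_cases hb : b' = b
          · subst hb
            have := hBsame b' _ hz (mem_supp_range x')
            have hx' : x' = CBTroot h := (c b').inj this
            exact Or.inr (by rw [hx']; rfl)
          · exact (hBcross b b' (fun he => hb he.symm) _ hz (mem_supp_range x')).elim
      rw [← hpair] at hz'
      exact hz'
    · rw [hsup] at hz
      have hz' : z ∈ ({embV b u, embV b w} : Set {l : List Bool // l.length ≤ h + 1}) := by
        rcases vert_cases z with rfl | ⟨b', x', rfl⟩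
        · rw [glueφ_root] at hz
          exact absurd (mem_supp_path e hz) (hr b)
        · rw [glueφ_emb] at hz
          by_cases hb : b' = b
          · subst hb
            rcases (c b').branch e x' hz with rfl | rfl
            · exact Or.inl rfl
            · exact Or.inr rfl
          · exact (hcc b' b hb _ (mem_supp_range x') (mem_supp_path e hz)).elim
      rw [← hpair] at hz'
      exact hz'
  · -- disj
    intro x y x' y' hxy hxy' hne v₀ hv hv'
    rcases gluePath_spec c r Bp hxy with ⟨b, hpair, hsup⟩ | ⟨b, u, w, e, hpair, hsup⟩ <;>
      rcases gluePath_spec c r Bp hxy' with ⟨b2, hpair2, hsup2⟩ | ⟨b2, u2, w2, e2, hpair2, hsup2⟩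
    · -- root-edge vs root-edge
      by_cases hb : b = b2
      · subst hb
        exact absurd (hpair.trans hpair2.symm) hne
      · have hvr : v₀ = r := hBB b b2 hb v₀ ((hsup v₀).mp hv) ((hsup2 v₀).mp hv')
        refine ⟨CBTroot (h + 1), ⟨?_, ?_⟩, by rw [glueφ_root, hvr]⟩
        · rw [hpair]; exact Or.inl rfl
        · rw [hpair2]; exact Or.inl rfl
    · -- root-edge vs subtree-edge
      rw [hsup] at hv
      rw [hsup2] at hv'
      by_cases hb : b = b2
      · subst hb
        have hvφ : v₀ = (c b).φ (CBTroot h) := hBsame b v₀ hv (mem_supp_path e2 hv')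
        have hroot : CBTroot h = u2 ∨ CBTroot h = w2 :=
          (c b).branch e2 (CBTroot h) (by rw [← hvφ]; exact hv')
        refine ⟨embV b (CBTroot h), ⟨?_, ?_⟩, by rw [glueφ_emb, hvφ]⟩
        · rw [hpair]; exact Or.inr rfl
        · rw [hpair2]
          rcases hroot with hroot | hroot
          · exact Or.inl (by rw [hroot])
          · exact Or.inr (by rw [hroot]; rfl)
      · exact (hBcross b b2 hb v₀ hv (mem_supp_path e2 hv')).elim
    · -- subtree-edge vs root-edge
      rw [hsup] at hv
      rw [hsup2] at hv'
      by_cases hb : b2 = b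
      · subst hb
        have hvφ : v₀ = (c b2).φ (CBTroot h) := hBsame b2 v₀ hv' (mem_supp_path e hv)
        have hroot : CBTroot h = u ∨ CBTroot h = w :=
          (c b2).branch e (CBTroot h) (by rw [← hvφ]; exact hv)
        refine ⟨embV b2 (CBTroot h), ⟨?_, ?_⟩, by rw [glueφ_emb, hvφ]⟩
        · rw [hpair]
          rcases hroot with hroot | hroot
          · exact Or.inl (by rw [hroot])
          · exact Or.inr (by rw [hroot]; rfl)
        · rw [hpair2]; exact Or.inr rfl
      · exact (hBcross b2 b hb v₀ hv' (mem_supp_path e hv)).elim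
    · -- subtree vs subtree
      rw [hsup] at hv
      rw [hsup2] at hv'
      by_cases hb : b = b2
      · subst hb
        by_cases hpq : ({u, w} : Set {l : List Bool // l.length ≤ h}) = {u2, w2}
        · exfalso
          apply hne
          rw [hpair, hpair2]
          have himg : ∀ (s t : {l : List Bool // l.length ≤ h}),
              ({embV b s, embV b t} : Set {l : List Bool // l.length ≤ h + 1})
                = embV b '' {s, t} := by
            intro s t; rw [Set.image_pair]
          rw [himg, himg, hpq]
        · obtain ⟨a, ⟨ha1, ha2⟩, haeq⟩ := (c b).disj e e2 hpq v₀ hv hv'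
          refine ⟨embV b a, ⟨?_, ?_⟩, by rw [glueφ_emb, haeq]⟩
          · rw [hpair]
            rcases ha1 with rfl | rfl
            · exact Or.inl rfl
            · exact Or.inr rfl
          · rw [hpair2]
            rcases ha2 with rfl | rfl
            · exact Or.inl rfl
            · exact Or.inr rfl
      · exact (hcc b b2 hb v₀ (mem_supp_path e hv) (mem_supp_path e2 hv')).elim
  · -- final walk
    refine ⟨W, hWp, ?_⟩
    intro u hu hmem
    show u = r
    by_cases hur : u = r
    · exact hur
    · exfalso
      rcases hmem with ⟨z, hz⟩ | ⟨x, y, hxy, hu'⟩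
      · rcases vert_cases z with rfl | ⟨b, x, rfl⟩
        · exact hur (by rw [← hz]; rfl)
        · have hz' : glueφ c r (embV b x) = u := hz
          rw [glueφ_emb] at hz'
          exact (hW u hu hur b).2 (hz' ▸ mem_supp_range x)
      · rcases gluePath_spec c r Bp hxy with ⟨b, _, hsup⟩ | ⟨b, u1, w1, e1, _, hsup⟩
        · exact (hW u hu hur b).1 ((hsup u).mp hu')
        · exact (hW u hu hur b).2 (mem_supp_path e1 ((hsup u).mp hu'))
section Assembly
variable {V : Type} {G : SimpleGraph V} {h : ℕ}

/-- The statement of the main theorem, for induction. -/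
def StmtIH (h : ℕ) : Prop := ∀ {V : Type} (G : SimpleGraph V), InT h G → ∀ v : V,
  ∃ (c : SubdivCopy (CBT h) G) (w : G.Walk v (c.φ (CBTroot h))),
    w.IsPath ∧ ∀ u ∈ w.support, u ∈ c.supp → u = c.φ (CBTroot h)

lemma glueMain2 (cL cR : SubdivCopy (CBT h) G) (r : V)
    (BpL : G.Walk r (cL.φ (CBTroot h))) (BpR : G.Walk r (cR.φ (CBTroot h)))
    (hBpL : BpL.IsPath) (hBpR : BpR.IsPath)
    (hLR : ∀ x ∈ BpL.support, x ∈ BpR.support → x = r)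
    (hLsame : ∀ x ∈ BpL.support, x ∈ cL.supp → x = cL.φ (CBTroot h))
    (hRsame : ∀ x ∈ BpR.support, x ∈ cR.supp → x = cR.φ (CBTroot h))
    (hLcross : ∀ x ∈ BpL.support, x ∉ cR.supp)
    (hRcross : ∀ x ∈ BpR.support, x ∉ cL.supp)
    (hcc : ∀ x ∈ cL.supp, x ∉ cR.supp)
    (hrL : r ∉ cL.supp) (hrR : r ∉ cR.supp)
    {v : V} (W : G.Walk v r) (hWp : W.IsPath)
    (hW : ∀ x ∈ W.support, x ≠ r →
      x ∉ BpL.support ∧ x ∉ BpR.support ∧ x ∉ cL.supp ∧ x ∉ cR.supp) :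
    ∃ (C : SubdivCopy (CBT (h + 1)) G) (w : G.Walk v (C.φ (CBTroot (h + 1)))),
      w.IsPath ∧ ∀ u ∈ w.support, u ∈ C.supp → u = C.φ (CBTroot (h + 1)) := by
  let c : Bool → SubdivCopy (CBT h) G := fun b => bif b then cL else cR
  have hct : c true = cL := rfl
  have hcf : c false = cR := rfl
  refine glueMain c r (fun b => ?_) (fun b => ?_) ?_ ?_ ?_ ?_ ?_ W hWp ?_
  · cases b
    · exact BpR
    · exact BpL
  · cases b
    · exact hBpR
    · exact hBpL
  · intro b b' hbb x hx hx'
    cases b <;> cases b'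
    · exact absurd rfl hbb
    · exact hLR x hx' hx
    · exact hLR x hx hx'
    · exact absurd rfl hbb
  · intro b x hx hx'
    cases b
    · exact hRsame x hx hx'
    · exact hLsame x hx hx'
  · intro b b' hbb x hx hx'
    cases b <;> cases b'
    · exact absurd rfl hbb
    · exact hRcross x hx hx'
    · exact hLcross x hx hx'
    · exact absurd rfl hbb
  · intro b b' hbb x hx hx'
    cases b <;> cases b'
    · exact absurd rfl hbb
    · exact hcc x hx' hx
    · exact hcc x hx hx'
    · exact absurd rfl hbb
  · intro b
    cases b
    · exact hrR
    · exact hrL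
  · intro x hx hxr b
    cases b
    · exact ⟨(hW x hx hxr).2.1, (hW x hx hxr).2.2.2⟩
    · exact ⟨(hW x hx hxr).1, (hW x hx hxr).2.2.1⟩

/-- Base case. -/
lemma baseCase (G : SimpleGraph V) (hG : InT 0 G) (v : V) :
    ∃ (c : SubdivCopy (CBT 0) G) (w : G.Walk v (c.φ (CBTroot 0))),
      w.IsPath ∧ ∀ u ∈ w.support, u ∈ c.supp → u = c.φ (CBTroot 0) := by
  have hsub : ∀ z : {l : List Bool // l.length ≤ 0}, z = CBTroot 0 := by
    intro z
    apply Subtype.ext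
    have := z.2
    rw [Nat.le_zero, List.length_eq_zero_iff] at this
    rw [this]; rfl
  have hnoadj : ∀ x y : {l : List Bool // l.length ≤ 0}, ¬ (CBT 0).Adj x y := by
    intro x y hxy
    rw [cbt_adj_iff] at hxy
    exact hxy.1 ((hsub x).trans (hsub y).symm)
  refine ⟨⟨fun _ => v, fun a b _ => (hsub a).trans (hsub b).symm,
    fun {x y} hxy => (hnoadj x y hxy).elim,
    fun {x y} hxy => (hnoadj x y hxy).elim,
    fun {x y} hxy => (hnoadj x y hxy).elim,
    fun {x y x' y'} hxy => (hnoadj x y hxy).elim⟩, Walk.nil, Walk.IsPath.nil, ?_⟩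
  intro u hu _
  rw [Walk.support_nil, List.mem_singleton] at hu
  exact hu

/-- Transfer the induction hypothesis into an induced subgraph. -/
lemma ihTransfer (IH : StmtIH h) {S : Set V} (hS : InT h (G.induce S))
    {y : V} (hy : y ∈ S) :
    ∃ (c : SubdivCopy (CBT h) G) (t : G.Walk y (c.φ (CBTroot h))),
      t.IsPath ∧ c.supp ⊆ S ∧ (∀ x ∈ t.support, x ∈ S) ∧
      (∀ x ∈ t.support, x ∈ c.supp → x = c.φ (CBTroot h)) := by
  obtain ⟨c', w', hw', hcond⟩ := IH (G.induce S) hS ⟨y, hy⟩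
  refine ⟨c'.mapInj (inducedHom S) (inducedHom_inj S),
    w'.map (inducedHom S), Walk.map_isPath_of_injective (inducedHom_inj S) hw', ?_, ?_, ?_⟩
  · rw [SubdivCopy.supp_mapInj]
    rintro x ⟨u, _, rfl⟩
    exact u.2
  · intro x hx
    replace hx : x ∈ (w'.map (inducedHom S)).support := hx
    rw [Walk.support_map] at hx
    obtain ⟨u, _, rfl⟩ := List.mem_map.mp hx
    exact u.2
  · intro x hx hmem
    replace hx : x ∈ (w'.map (inducedHom S)).support := hx
    rw [Walk.support_map] at hx
    obtain ⟨u, hu, rfl⟩ := List.mem_map.mp hx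
    rw [SubdivCopy.supp_mapInj] at hmem
    obtain ⟨u', hu', he⟩ := hmem
    have : u' = u := inducedHom_inj S he
    subst this
    have := hcond _ hu hu'
    rw [this]
    rfl

end Assembly
section Cases
variable {V : Type} {G : SimpleGraph V} {h : ℕ}

lemma caseBeta (IH : StmtIH h) {Bs X : Set V} (hBX : ∀ x ∈ Bs, x ∉ X)
    (hInB : InT h (G.induce Bs)) (hInX : InT h (G.induce X))
    {v z : V} (R : G.Walk v z) (hRp : R.IsPath) (hzB : z ∈ Bs)
    (hRB : ∀ x ∈ R.support, x ∈ Bs → x = z) (hRX : ∀ x ∈ R.support, x ∉ X)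
    {e xX : V} (lam : G.Walk e xX) (hlp : lam.IsPath) (heR : e ∈ R.support)
    (heB : e ∉ Bs)
    (hlB : ∀ x ∈ lam.support, x ∉ Bs)
    (hlX : ∀ x ∈ lam.support, x ∈ X → x = xX) (hxX : xX ∈ X)
    (hlR : ∀ x ∈ lam.support, x ∈ R.support → x = e) :
    ∃ (C : SubdivCopy (CBT (h + 1)) G) (w : G.Walk v (C.φ (CBTroot (h + 1)))),
      w.IsPath ∧ ∀ u ∈ w.support, u ∈ C.supp → u = C.φ (CBTroot (h + 1)) := by
  haveI := Classical.decEq V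
  obtain ⟨cB, tB, htBp, hcBsupp, htBsub, htBcond⟩ := ihTransfer IH hInB hzB
  obtain ⟨cX, tX, htXp, hcXsupp, htXsub, htXcond⟩ := ihTransfer IH hInX hxX
  set R1 := R.takeUntil e heR with hR1
  set R2 := R.dropUntil e heR with hR2
  have hsplit := takeUntil_dropUntil_inter hRp heR
  have hR1sub : ∀ x ∈ R1.support, x ∈ R.support := fun x hx => R.support_takeUntil_subset heR hx
  have hR2sub : ∀ x ∈ R2.support, x ∈ R.support := fun x hx => R.support_dropUntil_subset heR hx
  have hez : e ≠ z := fun hez => heB (hez ▸ hzB)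
  have hzR2 : z ∈ R2.support := Walk.end_mem_support _
  have hzR1 : z ∉ R1.support := fun hz1 => hez (hsplit z hz1 hzR2).symm
  -- the two branches
  have hBLjunction : ∀ x ∈ R2.support, x ∈ tB.support → x = z := by
    intro x hx hx'
    exact hRB x (hR2sub x hx) (htBsub x hx')
  have hBRjunction : ∀ x ∈ lam.support, x ∈ tX.support → x = xX := by
    intro x hx hx'
    exact hlX x hx (htXsub x hx')
  refine glueMain2 cB cX e (R2.append tB) (lam.append tX)
    (appendIsPath (hRp.dropUntil heR) htBp hBLjunction)
    (appendIsPath hlp htXp hBRjunction)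
    ?_ ?_ ?_ ?_ ?_ ?_ ?_ ?_ R1 (hRp.takeUntil heR) ?_
  · -- hLR
    intro x hx hx'
    rw [Walk.mem_support_append_iff] at hx hx'
    rcases hx with hx | hx <;> rcases hx' with hx' | hx'
    · exact hlR x hx' (hR2sub x hx)
    · exact absurd (htXsub x hx') (hRX x (hR2sub x hx))
    · exact absurd (htBsub x hx) (hlB x hx')
    · exact absurd (htXsub x hx') (hBX x (htBsub x hx))
  · -- hLsame
    intro x hx hmem
    rw [Walk.mem_support_append_iff] at hx
    rcases hx with hx | hx
    · have hxz : x = z := hRB x (hR2sub x hx) (hcBsupp hmem)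
      subst hxz
      exact htBcond x (Walk.start_mem_support _) hmem
    · exact htBcond x hx hmem
  · -- hRsame
    intro x hx hmem
    rw [Walk.mem_support_append_iff] at hx
    rcases hx with hx | hx
    · have hxz : x = xX := hlX x hx (hcXsupp hmem)
      subst hxz
      exact htXcond x (Walk.start_mem_support _) hmem
    · exact htXcond x hx hmem
  · -- hLcross
    intro x hx hmem
    rw [Walk.mem_support_append_iff] at hx
    rcases hx with hx | hx
    · exact hRX x (hR2sub x hx) (hcXsupp hmem)
    · exact hBX x (htBsub x hx) (hcXsupp hmem)
  · -- hRcross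
    intro x hx hmem
    rw [Walk.mem_support_append_iff] at hx
    rcases hx with hx | hx
    · exact hlB x hx (hcBsupp hmem)
    · exact hBX x (hcBsupp hmem) (htXsub x hx)
  · -- hcc
    intro x hx hmem
    exact hBX x (hcBsupp hx) (hcXsupp hmem)
  · -- hrL
    exact fun hmem => heB (hcBsupp hmem)
  · -- hrR
    exact fun hmem => hRX e heR (hcXsupp hmem)
  · -- hW
    intro x hx hxe
    have hxR : x ∈ R.support := hR1sub x hx
    have hxBs : x ∉ Bs := by
      intro hxB
      have := hRB x hxR hxB
      subst this
      exact hzR1 hx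
    refine ⟨?_, ?_, fun hmem => hxBs (hcBsupp hmem), fun hmem => hRX x hxR (hcXsupp hmem)⟩
    · rw [Walk.mem_support_append_iff]
      rintro (hx2 | htB)
      · exact hxe (hsplit x hx hx2)
      · exact hxBs (htBsub x htB)
    · rw [Walk.mem_support_append_iff]
      rintro (hl | htX)
      · exact hxe (hlR x hl hxR)
      · exact hRX x hxR (htXsub x htX)

end Cases
section CaseAlpha
variable {V : Type} {G : SimpleGraph V} {h : ℕ}

lemma caseAlpha (IH : StmtIH h) {A Bs C : Set V}
    (hAB : ∀ x ∈ A, x ∉ Bs) (hAC : ∀ x ∈ A, x ∉ C) (hBC : ∀ x ∈ Bs, x ∉ C)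
    (hInA : InT h (G.induce A)) (hInB : InT h (G.induce Bs)) (hInC : InT h (G.induce C))
    {v z : V} (R : G.Walk v z) (hRp : R.IsPath) (hzB : z ∈ Bs)
    (hRA : ∀ x ∈ R.support, x ∉ A) (hRB : ∀ x ∈ R.support, x ∈ Bs → x = z)
    (hRC : ∀ x ∈ R.support, x ∉ C)
    {xB xC : V} (p : G.Walk xB xC) (hpp : p.IsPath) (hxB : xB ∈ Bs) (hxC : xC ∈ C)
    (hpA : ∀ x ∈ p.support, x ∉ A) (hpB : ∀ x ∈ p.support, x ∈ Bs → x = xB)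
    (hpC : ∀ x ∈ p.support, x ∈ C → x = xC)
    {wB wA : V} (q : G.Walk wB wA) (hqp : q.IsPath) (hwB : wB ∈ Bs) (hwA : wA ∈ A)
    (hqA : ∀ x ∈ q.support, x ∈ A → x = wA) (hqB : ∀ x ∈ q.support, x ∈ Bs → x = wB)
    (hqC : ∀ x ∈ q.support, x ∉ C)
    (hpq : ∀ x ∈ p.support, x ∈ q.support → x ∈ Bs)
    (hpR : ∀ x ∈ p.support, x ∈ R.support → x ∈ Bs)
    (hqR : ∀ x ∈ q.support, x ∈ R.support → x ∈ Bs) :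
    ∃ (C' : SubdivCopy (CBT (h + 1)) G) (w : G.Walk v (C'.φ (CBTroot (h + 1)))),
      w.IsPath ∧ ∀ u ∈ w.support, u ∈ C'.supp → u = C'.φ (CBTroot (h + 1)) := by
  obtain ⟨m, hmB, Lz, Lx, Lw, hLzp, hLxp, hLwp, hLzB, hLxB, hLwB, hzx, hzw, hxw⟩ :=
    tripod Bs (InT.connected hInB) hzB hxB hwB
  obtain ⟨cA, tA, htAp, hcAsupp, htAsub, htAcond⟩ := ihTransfer IH hInA hwA
  obtain ⟨cC, tC, htCp, hcCsupp, htCsub, htCcond⟩ := ihTransfer IH hInC hxC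
  have hwBLw : wB ∈ Lw.support := Walk.end_mem_support _
  have hxBLx : xB ∈ Lx.support := Walk.end_mem_support _
  have hzLz : z ∈ Lz.support := Walk.end_mem_support _
  have hqLz : ∀ x ∈ q.support, x ∈ Lz.support → x = m := fun x hx hx' => by
    have he : x = wB := hqB x hx (hLzB x hx')
    subst he; exact hzw x hx' hwBLw
  have hqLx : ∀ x ∈ q.support, x ∈ Lx.support → x = m := fun x hx hx' => by
    have he : x = wB := hqB x hx (hLxB x hx')
    subst he; exact hxw x hx' hwBLw
  have hpLz : ∀ x ∈ p.support, x ∈ Lz.support → x = m := fun x hx hx' => by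
    have he : x = xB := hpB x hx (hLzB x hx')
    subst he; exact hzx x hx' hxBLx
  have hpLw : ∀ x ∈ p.support, x ∈ Lw.support → x = m := fun x hx hx' => by
    have he : x = xB := hpB x hx (hLwB x hx')
    subst he; exact hxw x hxBLx hx'
  have hRLz : ∀ x ∈ R.support, x ∈ Lz.support → x = z := fun x hx hx' =>
    hRB x hx (hLzB x hx')
  have hRLx : ∀ x ∈ R.support, x ∈ Lx.support → x = m := fun x hx hx' => by
    have he : x = z := hRB x hx (hLxB x hx')
    subst he; exact hzx x hzLz hx'
  have hRLw : ∀ x ∈ R.support, x ∈ Lw.support → x = m := fun x hx hx' => by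
    have he : x = z := hRB x hx (hLwB x hx')
    subst he; exact hzw x hzLz hx'
  have hRq : ∀ x ∈ R.support, x ∈ q.support → x = m := fun x hx hx' => by
    have hxB' : x ∈ Bs := hqR x hx' hx
    have h1 : x = z := hRB x hx hxB'
    have h2 : x = wB := hqB x hx' hxB'
    rw [h1] at h2 ⊢
    have h3 : z ∈ Lw.support := by rw [h2]; exact hwBLw
    exact hzw z hzLz h3
  have hRp' : ∀ x ∈ R.support, x ∈ p.support → x = m := fun x hx hx' => by
    have hxB' : x ∈ Bs := hpR x hx' hx
    have h1 : x = z := hRB x hx hxB'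
    have h2 : x = xB := hpB x hx' hxB'
    rw [h1] at h2 ⊢
    have h3 : z ∈ Lx.support := by rw [h2]; exact hxBLx
    exact hzx z hzLz h3
  have hqp' : ∀ x ∈ q.support, x ∈ p.support → x = m := fun x hx hx' => by
    have hxB' : x ∈ Bs := hpq x hx' hx
    have h1 : x = wB := hqB x hx hxB'
    have h2 : x = xB := hpB x hx' hxB'
    rw [h1] at h2 ⊢
    have h3 : wB ∈ Lx.support := by rw [h2]; exact hxBLx
    exact hxw wB h3 hwBLw
  -- branch paths
  have hqtA : ∀ x ∈ q.support, x ∈ tA.support → x = wA := fun x hx hx' =>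
    hqA x hx (htAsub x hx')
  have hLwqtA : ∀ x ∈ Lw.support, x ∈ (q.append tA).support → x = wB := by
    intro x hx hx'
    rw [Walk.mem_support_append_iff] at hx'
    rcases hx' with hx' | hx'
    · exact hqB x hx' (hLwB x hx)
    · exact absurd (hLwB x hx) (hAB x (htAsub x hx'))
  have hptC : ∀ x ∈ p.support, x ∈ tC.support → x = xC := fun x hx hx' =>
    hpC x hx (htCsub x hx')
  have hLxptC : ∀ x ∈ Lx.support, x ∈ (p.append tC).support → x = xB := by
    intro x hx hx'
    rw [Walk.mem_support_append_iff] at hx'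
    rcases hx' with hx' | hx'
    · exact hpB x hx' (hLxB x hx)
    · exact absurd (hLxB x hx) (fun hm => hBC x hm (htCsub x hx'))
  have hRLzrev : ∀ x ∈ R.support, x ∈ Lz.reverse.support → x = z := by
    intro x hx hx'
    rw [Walk.support_reverse, List.mem_reverse] at hx'
    exact hRLz x hx hx'
  -- decompose membership in branches
  have hBLmem : ∀ x, x ∈ (Lw.append (q.append tA)).support →
      x ∈ Lw.support ∨ x ∈ q.support ∨ x ∈ tA.support := by
    intro x hx
    rw [Walk.mem_support_append_iff, Walk.mem_support_append_iff] at hx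
    tauto
  have hBRmem : ∀ x, x ∈ (Lx.append (p.append tC)).support →
      x ∈ Lx.support ∨ x ∈ p.support ∨ x ∈ tC.support := by
    intro x hx
    rw [Walk.mem_support_append_iff, Walk.mem_support_append_iff] at hx
    tauto
  refine glueMain2 cA cC m (Lw.append (q.append tA)) (Lx.append (p.append tC))
    (appendIsPath hLwp (appendIsPath hqp htAp hqtA) hLwqtA)
    (appendIsPath hLxp (appendIsPath hpp htCp hptC) hLxptC)
    ?_ ?_ ?_ ?_ ?_ ?_ ?_ ?_ (R.append Lz.reverse)
    (appendIsPath hRp hLzp.reverse hRLzrev) ?_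
  · -- hLR
    intro x hx hx'
    rcases hBLmem x hx with hx | hx | hx <;> rcases hBRmem x hx' with hx' | hx' | hx'
    · exact hxw x hx' hx
    · exact hpLw x hx' hx
    · exact absurd (hLwB x hx) (fun hm => hBC x hm (htCsub x hx'))
    · exact hqLx x hx hx'
    · exact hqp' x hx hx'
    · exact absurd (htCsub x hx') (hqC x hx)
    · exact absurd (hLxB x hx') (hAB x (htAsub x hx))
    · exact absurd (htAsub x hx) (hpA x hx')
    · exact absurd (htCsub x hx') (hAC x (htAsub x hx))
  · -- hLsame
    intro x hx hmem
    rcases hBLmem x hx with hx | hx | hx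
    · exact absurd (hLwB x hx) (hAB x (hcAsupp hmem))
    · have he : x = wA := hqA x hx (hcAsupp hmem)
      subst he
      exact htAcond x (Walk.start_mem_support _) hmem
    · exact htAcond x hx hmem
  · -- hRsame
    intro x hx hmem
    rcases hBRmem x hx with hx | hx | hx
    · exact absurd (hcCsupp hmem) (hBC x (hLxB x hx))
    · have he : x = xC := hpC x hx (hcCsupp hmem)
      subst he
      exact htCcond x (Walk.start_mem_support _) hmem
    · exact htCcond x hx hmem
  · -- hLcross
    intro x hx hmem
    rcases hBLmem x hx with hx | hx | hx
    · exact hBC x (hLwB x hx) (hcCsupp hmem)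
    · exact hqC x hx (hcCsupp hmem)
    · exact hAC x (htAsub x hx) (hcCsupp hmem)
  · -- hRcross
    intro x hx hmem
    rcases hBRmem x hx with hx | hx | hx
    · exact hAB x (hcAsupp hmem) (hLxB x hx)
    · exact hpA x hx (hcAsupp hmem)
    · exact hAC x (hcAsupp hmem) (htCsub x hx)
  · -- hcc
    intro x hx hmem
    exact hAC x (hcAsupp hx) (hcCsupp hmem)
  · -- hrL
    exact fun hmem => hAB m (hcAsupp hmem) hmB
  · -- hrR
    exact fun hmem => hBC m hmB (hcCsupp hmem)
  · -- hW
    intro x hx hxm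
    have hxRLz : x ∈ R.support ∨ x ∈ Lz.support := by
      rw [Walk.mem_support_append_iff, Walk.support_reverse, List.mem_reverse] at hx
      exact hx
    refine ⟨?_, ?_, ?_, ?_⟩
    · intro hx'
      rcases hBLmem x hx' with hx' | hx' | hx'
      · rcases hxRLz with hxx | hxx
        · exact hxm (hRLw x hxx hx')
        · exact hxm (hzw x hxx hx')
      · rcases hxRLz with hxx | hxx
        · exact hxm (hRq x hxx hx')
        · exact hxm (hqLz x hx' hxx)
      · rcases hxRLz with hxx | hxx
        · exact hRA x hxx (htAsub x hx')
        · exact hAB x (htAsub x hx') (hLzB x hxx)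
    · intro hx'
      rcases hBRmem x hx' with hx' | hx' | hx'
      · rcases hxRLz with hxx | hxx
        · exact hxm (hRLx x hxx hx')
        · exact hxm (hzx x hxx hx')
      · rcases hxRLz with hxx | hxx
        · exact hxm (hRp' x hxx hx')
        · exact hxm (hpLz x hx' hxx)
      · rcases hxRLz with hxx | hxx
        · exact hRC x hxx (htCsub x hx')
        · exact hBC x (hLzB x hxx) (htCsub x hx')
    · intro hmem
      rcases hxRLz with hxx | hxx
      · exact hRA x hxx (hcAsupp hmem)
      · exact hAB x (hcAsupp hmem) (hLzB x hxx)
    · intro hmem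
      rcases hxRLz with hxx | hxx
      · exact hRC x hxx (hcCsupp hmem)
      · exact hBC x (hLzB x hxx) (hcCsupp hmem)

end CaseAlpha
section CaseDelta
variable {V : Type} {G : SimpleGraph V} {h : ℕ}

lemma caseDelta (IH : StmtIH h) {A Bs C : Set V}
    (hAB : ∀ x ∈ A, x ∉ Bs) (hAC : ∀ x ∈ A, x ∉ C) (hBC : ∀ x ∈ Bs, x ∉ C)
    (hInA : InT h (G.induce A)) (hInB : InT h (G.induce Bs)) (hInC : InT h (G.induce C))
    {v z : V} (R : G.Walk v z) (hRp : R.IsPath) (hzB : z ∈ Bs)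
    (hRA : ∀ x ∈ R.support, x ∉ A) (hRB : ∀ x ∈ R.support, x ∈ Bs → x = z)
    (hRC : ∀ x ∈ R.support, x ∉ C)
    {xB xC : V} (p : G.Walk xB xC) (hpp : p.IsPath) (hxB : xB ∈ Bs) (hxC : xC ∈ C)
    (hpA : ∀ x ∈ p.support, x ∉ A) (hpB : ∀ x ∈ p.support, x ∈ Bs → x = xB)
    (hpC : ∀ x ∈ p.support, x ∈ C → x = xC)
    (hpR : ∀ x ∈ p.support, x ∈ R.support → x ∈ Bs)
    {f wA : V} (q : G.Walk f wA) (hqp : q.IsPath) (hfp : f ∈ p.support)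
    (hfB : f ∉ Bs) (hfR : f ∉ R.support) (hwA : wA ∈ A)
    (hqA : ∀ x ∈ q.support, x ∈ A → x = wA)
    (hqB : ∀ x ∈ q.support, x ∉ Bs) (hqC : ∀ x ∈ q.support, x ∉ C)
    (hqpf : ∀ x ∈ q.support, x ∈ p.support → x = f)
    (hqR : ∀ x ∈ q.support, x ∉ R.support) :
    ∃ (C' : SubdivCopy (CBT (h + 1)) G) (w : G.Walk v (C'.φ (CBTroot (h + 1)))),
      w.IsPath ∧ ∀ u ∈ w.support, u ∈ C'.supp → u = C'.φ (CBTroot (h + 1)) := by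
  haveI := Classical.decEq V
  obtain ⟨cA, tA, htAp, hcAsupp, htAsub, htAcond⟩ := ihTransfer IH hInA hwA
  obtain ⟨cC, tC, htCp, hcCsupp, htCsub, htCcond⟩ := ihTransfer IH hInC hxC
  -- a walk from z to xB inside Bs
  obtain ⟨ω⟩ := (InT.connected hInB) ⟨z, hzB⟩ ⟨xB, hxB⟩
  set s₀ : G.Walk z xB := ω.map (inducedHom Bs) with hs₀
  have hs₀B : ∀ x ∈ s₀.support, x ∈ Bs := by
    intro x hx
    rw [hs₀] at hx
    replace hx : x ∈ (ω.map (inducedHom Bs)).support := hx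
    rw [Walk.support_map] at hx
    obtain ⟨u, _, rfl⟩ := List.mem_map.mp hx
    exact u.2
  set p1 := p.takeUntil f hfp with hp1
  set p2 := p.dropUntil f hfp with hp2
  have hsplit := takeUntil_dropUntil_inter hpp hfp
  have hp1sub : ∀ x ∈ p1.support, x ∈ p.support := fun x hx => p.support_takeUntil_subset hfp hx
  have hp2sub : ∀ x ∈ p2.support, x ∈ p.support := fun x hx => p.support_dropUntil_subset hfp hx
  have hfxB : f ≠ xB := fun he => hfB (he ▸ hxB)
  have hfxC : f ≠ xC := fun he => hqC f (Walk.start_mem_support _) (he ▸ hxC)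
  have hxBp1 : xB ∈ p1.support := Walk.start_mem_support _
  have hxBp2 : xB ∉ p2.support := fun hmem => hfxB (hsplit xB hxBp1 hmem).symm
  have hxCp2 : xC ∈ p2.support := Walk.end_mem_support _
  have hxCp1 : xC ∉ p1.support := fun hmem => hfxC (hsplit xC hmem hxCp2).symm
  have hfA : f ∉ A := fun hmem => hpA f hfp hmem
  have hfC : f ∉ C := fun hmem => hqC f (Walk.start_mem_support _) hmem
  -- the tail walk
  set W := ((R.append s₀).append p1).bypass with hW
  have hWsub : ∀ x ∈ W.support, x ∈ R.support ∨ x ∈ s₀.support ∨ x ∈ p1.support := by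
    intro x hx
    have := Walk.support_bypass_subset _ hx
    rw [Walk.mem_support_append_iff, Walk.mem_support_append_iff] at this
    tauto
  refine glueMain2 cA cC f (q.append tA) (p2.append tC)
    (appendIsPath hqp htAp (fun x hx hx' => hqA x hx (htAsub x hx')))
    (appendIsPath (hpp.dropUntil hfp) htCp (fun x hx hx' => hpC x (hp2sub x hx) (htCsub x hx')))
    ?_ ?_ ?_ ?_ ?_ ?_ ?_ ?_ W (Walk.bypass_isPath _) ?_
  · -- hLR
    intro x hx hx'
    rw [Walk.mem_support_append_iff] at hx hx'
    rcases hx with hx | hx <;> rcases hx' with hx' | hx'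
    · exact hqpf x hx (hp2sub x hx')
    · exact absurd (htCsub x hx') (hqC x hx)
    · exact absurd (hp2sub x hx') (fun hm => hpA x hm (htAsub x hx))
    · exact absurd (htCsub x hx') (hAC x (htAsub x hx))
  · -- hLsame
    intro x hx hmem
    rw [Walk.mem_support_append_iff] at hx
    rcases hx with hx | hx
    · have he : x = wA := hqA x hx (hcAsupp hmem)
      subst he
      exact htAcond x (Walk.start_mem_support _) hmem
    · exact htAcond x hx hmem
  · -- hRsame
    intro x hx hmem
    rw [Walk.mem_support_append_iff] at hx
    rcases hx with hx | hx
    · have he : x = xC := hpC x (hp2sub x hx) (hcCsupp hmem)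
      subst he
      exact htCcond x (Walk.start_mem_support _) hmem
    · exact htCcond x hx hmem
  · -- hLcross
    intro x hx hmem
    rw [Walk.mem_support_append_iff] at hx
    rcases hx with hx | hx
    · exact hqC x hx (hcCsupp hmem)
    · exact hAC x (htAsub x hx) (hcCsupp hmem)
  · -- hRcross
    intro x hx hmem
    rw [Walk.mem_support_append_iff] at hx
    rcases hx with hx | hx
    · exact hpA x (hp2sub x hx) (hcAsupp hmem)
    · exact hAC x (hcAsupp hmem) (htCsub x hx)
  · -- hcc
    intro x hx hmem
    exact hAC x (hcAsupp hx) (hcCsupp hmem)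
  · -- hrL
    exact fun hmem => hfA (hcAsupp hmem)
  · -- hrR
    exact fun hmem => hfC (hcCsupp hmem)
  · -- hW
    intro x hx hxf
    have hxloc := hWsub x hx
    refine ⟨?_, ?_, ?_, ?_⟩
    · rw [Walk.mem_support_append_iff]
      rintro (hx' | hx')
      · rcases hxloc with hxx | hxx | hxx
        · exact hqR x hx' hxx
        · exact hqB x hx' (hs₀B x hxx)
        · exact hxf (hqpf x hx' (hp1sub x hxx))
      · rcases hxloc with hxx | hxx | hxx
        · exact hRA x hxx (htAsub x hx')
        · exact hAB x (htAsub x hx') (hs₀B x hxx)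
        · exact hpA x (hp1sub x hxx) (htAsub x hx')
    · rw [Walk.mem_support_append_iff]
      rintro (hx' | hx')
      · rcases hxloc with hxx | hxx | hxx
        · have hxBs : x ∈ Bs := hpR x (hp2sub x hx') hxx
          have he : x = xB := hpB x (hp2sub x hx') hxBs
          exact hxBp2 (he ▸ hx')
        · have he : x = xB := hpB x (hp2sub x hx') (hs₀B x hxx)
          exact hxBp2 (he ▸ hx')
        · exact hxf (hsplit x hxx hx')
      · rcases hxloc with hxx | hxx | hxx
        · exact hRC x hxx (htCsub x hx')
        · exact hBC x (hs₀B x hxx) (htCsub x hx')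
        · have he : x = xC := hpC x (hp1sub x hxx) (htCsub x hx')
          exact hxCp1 (he ▸ hxx)
    · intro hmem
      rcases hxloc with hxx | hxx | hxx
      · exact hRA x hxx (hcAsupp hmem)
      · exact hAB x (hcAsupp hmem) (hs₀B x hxx)
      · exact hpA x (hp1sub x hxx) (hcAsupp hmem)
    · intro hmem
      rcases hxloc with hxx | hxx | hxx
      · exact hRC x hxx (hcCsupp hmem)
      · exact hBC x (hs₀B x hxx) (hcCsupp hmem)
      · have he : x = xC := hpC x (hp1sub x hxx) (hcCsupp hmem)
        exact hxCp1 (he ▸ hxx)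

end CaseDelta
section Final
variable {V : Type} {G : SimpleGraph V} {h : ℕ}

lemma caseMain (IH : StmtIH h) {A Bs C : Set V}
    (hAB : ∀ x ∈ A, x ∉ Bs) (hAC : ∀ x ∈ A, x ∉ C) (hBC : ∀ x ∈ Bs, x ∉ C)
    (hInA : InT h (G.induce A)) (hInB : InT h (G.induce Bs)) (hInC : InT h (G.induce C))
    (hLBC : LinkedAvoiding G Bs C A) (hLBA : LinkedAvoiding G Bs A C)
    {v z : V} (R : G.Walk v z) (hRp : R.IsPath) (hzB : z ∈ Bs)
    (hRA : ∀ x ∈ R.support, x ∉ A) (hRB : ∀ x ∈ R.support, x ∈ Bs → x = z)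
    (hRC : ∀ x ∈ R.support, x ∉ C) :
    ∃ (C' : SubdivCopy (CBT (h + 1)) G) (w : G.Walk v (C'.φ (CBTroot (h + 1)))),
      w.IsPath ∧ ∀ u ∈ w.support, u ∈ C'.supp → u = C'.φ (CBTroot (h + 1)) := by
  -- step 1: a link from Bs to C, trimmed
  obtain ⟨b0, hb0, c0, hc0, ω, hωA⟩ := hLBC
  obtain ⟨xC, hxC, ω₁, hω₁p, hω₁C, hω₁sub⟩ := firstHit C ω hc0
  have hω₁A : ∀ x ∈ ω₁.support, x ∉ A := fun x hx hmem => hωA x (hω₁sub x hx) hmem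
  obtain ⟨e, he, ω₂, hω₂p, hω₂hit, hω₂sub'⟩ :=
    firstHit (Bs ∪ {x | x ∈ R.support}) ω₁.reverse (Or.inl hb0)
  have hω₂sub : ∀ x ∈ ω₂.support, x ∈ ω₁.support := by
    intro x hx
    have := hω₂sub' x hx
    rwa [Walk.support_reverse, List.mem_reverse] at this
  have hω₂A : ∀ x ∈ ω₂.support, x ∉ A := fun x hx => hω₁A x (hω₂sub x hx)
  have hω₂C : ∀ x ∈ ω₂.support, x ∈ C → x = xC := fun x hx => hω₁C x (hω₂sub x hx)
  by_cases heB : e ∈ Bs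
  · -- we have a clean link p : e → xC
    set p : G.Walk e xC := ω₂.reverse with hpdef
    have hpmem : ∀ x ∈ p.support, x ∈ ω₂.support := by
      intro x hx
      rwa [hpdef, Walk.support_reverse, List.mem_reverse] at hx
    have hpp : p.IsPath := hω₂p.reverse
    have hpA : ∀ x ∈ p.support, x ∉ A := fun x hx => hω₂A x (hpmem x hx)
    have hpC : ∀ x ∈ p.support, x ∈ C → x = xC := fun x hx => hω₂C x (hpmem x hx)
    have hpB : ∀ x ∈ p.support, x ∈ Bs → x = e := fun x hx hmem =>
      hω₂hit x (hpmem x hx) (Or.inl hmem)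
    have hpR : ∀ x ∈ p.support, x ∈ R.support → x ∈ Bs := by
      intro x hx hmem
      have hxe := hω₂hit x (hpmem x hx) (Or.inr hmem)
      exact hxe ▸ heB
    -- step 2: a link from Bs to A, trimmed against everything
    obtain ⟨b1, hb1, a1, ha1, ψ, hψC⟩ := hLBA
    obtain ⟨wA, hwA, ψ₁, hψ₁p, hψ₁A, hψ₁sub⟩ := firstHit A ψ ha1
    have hψ₁C : ∀ x ∈ ψ₁.support, x ∉ C := fun x hx hmem => hψC x (hψ₁sub x hx) hmem
    obtain ⟨f, hf, ψ₂, hψ₂p, hψ₂hit, hψ₂sub'⟩ :=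
      firstHit (Bs ∪ {x | x ∈ R.support} ∪ {x | x ∈ p.support}) ψ₁.reverse
        (Or.inl (Or.inl hb1))
    have hψ₂sub : ∀ x ∈ ψ₂.support, x ∈ ψ₁.support := by
      intro x hx
      have := hψ₂sub' x hx
      rwa [Walk.support_reverse, List.mem_reverse] at this
    set q : G.Walk f wA := ψ₂.reverse with hqdef
    have hqmem : ∀ x ∈ q.support, x ∈ ψ₂.support := by
      intro x hx
      rwa [hqdef, Walk.support_reverse, List.mem_reverse] at hx
    have hqp : q.IsPath := hψ₂p.reverse
    have hqA : ∀ x ∈ q.support, x ∈ A → x = wA := fun x hx =>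
      hψ₁A x (hψ₂sub x (hqmem x hx))
    have hqC : ∀ x ∈ q.support, x ∉ C := fun x hx => hψ₁C x (hψ₂sub x (hqmem x hx))
    have hqhit : ∀ x ∈ q.support,
        x ∈ Bs ∪ {x | x ∈ R.support} ∪ {x | x ∈ p.support} → x = f := fun x hx =>
      hψ₂hit x (hqmem x hx)
    by_cases hfB : f ∈ Bs
    · -- f ∈ Bs : tripod case
      refine caseAlpha IH hAB hAC hBC hInA hInB hInC R hRp hzB hRA hRB hRC
        p hpp heB hxC hpA hpB hpC q hqp hfB hwA hqA
        (fun x hx hmem => hqhit x hx (Or.inl (Or.inl hmem))) hqC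
        (fun x hx hmem => ?_) hpR (fun x hx hmem => ?_)
      · exact (hqhit x hmem (Or.inr hx)) ▸ hfB
      · exact (hqhit x hx (Or.inl (Or.inr hmem))) ▸ hfB
    · by_cases hfR : f ∈ R.support
      · -- f on the tail R : beta case with X = A
        refine caseBeta IH (fun x hx hmem => hAB x hmem hx) hInB hInA R hRp hzB hRB hRA
          q hqp hfR hfB ?_ hqA hwA ?_
        · intro x hx hmem
          exact hfB ((hqhit x hx (Or.inl (Or.inl hmem))) ▸ hmem)
        · intro x hx hmem
          exact hqhit x hx (Or.inl (Or.inr hmem))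
      · -- f on the link p : delta case
        have hfp : f ∈ p.support := by
          rcases hf with (hfB' | hfR') | hfp'
          · exact absurd hfB' hfB
          · exact absurd hfR' hfR
          · exact hfp'
        refine caseDelta IH hAB hAC hBC hInA hInB hInC R hRp hzB hRA hRB hRC
          p hpp heB hxC hpA hpB hpC hpR q hqp hfp hfB hfR hwA hqA ?_ hqC ?_ ?_
        · intro x hx hmem
          exact hfB ((hqhit x hx (Or.inl (Or.inl hmem))) ▸ hmem)
        · intro x hx hmem
          exact hqhit x hx (Or.inr hmem)
        · intro x hx hmem
          exact hfR ((hqhit x hx (Or.inl (Or.inr hmem))) ▸ hmem)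
  · -- e on the tail R : beta case with X = C
    have heR : e ∈ R.support := by
      rcases he with heB' | heR
      · exact absurd heB' heB
      · exact heR
    refine caseBeta IH hBC hInB hInC R hRp hzB hRB hRC ω₂.reverse hω₂p.reverse heR heB
      ?_ ?_ hxC ?_
    · intro x hx hmem
      rw [Walk.support_reverse, List.mem_reverse] at hx
      have := hω₂hit x hx (Or.inl hmem)
      rw [this] at hmem
      exact heB hmem
    · intro x hx
      rw [Walk.support_reverse, List.mem_reverse] at hx
      exact hω₂C x hx
    · intro x hx hmem
      rw [Walk.support_reverse, List.mem_reverse] at hx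
      exact hω₂hit x hx (Or.inr hmem)

end Final
section TheEnd

theorem mainInd : ∀ h : ℕ, StmtIH h := by
  intro h
  induction h with
  | zero => intro V G hG v; exact baseCase G hG v
  | succ h IHh =>
    intro V G hG v
    obtain ⟨hconn, V₁, V₂, V₃, d12, d13, d23, h1, h2, h3, L12, L13, L23⟩ := hG
    have d12' : ∀ x ∈ V₁, x ∉ V₂ := fun x hx hx' => (Set.disjoint_left.mp d12) hx hx'
    have d21' : ∀ x ∈ V₂, x ∉ V₁ := fun x hx hx' => (Set.disjoint_left.mp d12) hx' hx
    have d13' : ∀ x ∈ V₁, x ∉ V₃ := fun x hx hx' => (Set.disjoint_left.mp d13) hx hx'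
    have d31' : ∀ x ∈ V₃, x ∉ V₁ := fun x hx hx' => (Set.disjoint_left.mp d13) hx' hx
    have d23' : ∀ x ∈ V₂, x ∉ V₃ := fun x hx hx' => (Set.disjoint_left.mp d23) hx hx'
    have d32' : ∀ x ∈ V₃, x ∉ V₂ := fun x hx hx' => (Set.disjoint_left.mp d23) hx' hx
    have hc1 : (G.induce V₁).Connected := InT.connected h1
    obtain ⟨u₀⟩ := hc1.nonempty
    obtain ⟨ω⟩ := hconn.preconnected v u₀.val
    obtain ⟨z, hz, R, hRp, hRhit, -⟩ :=
      firstHit (V₁ ∪ V₂ ∪ V₃) ω (Or.inl (Or.inl u₀.2))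
    rcases hz with (hz1 | hz2) | hz3
    · -- z ∈ V₁ : Bs = V₁, A = V₂, C = V₃
      refine caseMain IHh d21' d23' d13' h2 h1 h3 L13 L12 R hRp hz1
        (fun x hx hmem => ?_) (fun x hx hmem => hRhit x hx (Or.inl (Or.inl hmem)))
        (fun x hx hmem => ?_)
      · exact d12' z hz1 ((hRhit x hx (Or.inl (Or.inr hmem))) ▸ hmem)
      · exact d13' z hz1 ((hRhit x hx (Or.inr hmem)) ▸ hmem)
    · -- z ∈ V₂ : Bs = V₂, A = V₁, C = V₃
      refine caseMain IHh d12' d13' d23' h1 h2 h3 L23 L12.symm2 R hRp hz2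
        (fun x hx hmem => ?_) (fun x hx hmem => hRhit x hx (Or.inl (Or.inr hmem)))
        (fun x hx hmem => ?_)
      · exact d21' z hz2 ((hRhit x hx (Or.inl (Or.inl hmem))) ▸ hmem)
      · exact d23' z hz2 ((hRhit x hx (Or.inr hmem)) ▸ hmem)
    · -- z ∈ V₃ : Bs = V₃, A = V₁, C = V₂
      refine caseMain IHh d13' d12' d32' h1 h3 h2 L23.symm2 L13.symm2 R hRp hz3
        (fun x hx hmem => ?_) (fun x hx hmem => hRhit x hx (Or.inr hmem))
        (fun x hx hmem => ?_)
      · exact d31' z hz3 ((hRhit x hx (Or.inl (Or.inl hmem))) ▸ hmem)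
      · exact d32' z hz3 ((hRhit x hx (Or.inl (Or.inr hmem))) ▸ hmem)

end TheEnd

theorem stmt3 {V : Type} (G : SimpleGraph V) (h : ℕ) (hG : InT h G) (v : V) :
    ∃ (c : SubdivCopy (CBT h) G) (w : G.Walk v (c.φ (CBTroot h))),
      w.IsPath ∧ ∀ u ∈ w.support, u ∈ c.supp → u = c.φ (CBTroot h) := by
  exact mainInd h G hG v
end GlueMain
end

section
/- If a connected graph G on at most t vertices contains a cycle or a vertex of degree at least 3, then G has three vertices v_1, v_2, v_3 such that any two of them can be connected by a path in G avoiding the third; consequently G ∈ T_1. -/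
open SimpleGraph

lemma singleton_induce_connected {V : Type} (G : SimpleGraph V) (v : V) :
    (G.induce ({v} : Set V)).Connected := by
  refine ⟨?_⟩
  rintro ⟨a, ha⟩ ⟨b, hb⟩
  simp only [Set.mem_singleton_iff] at ha hb
  subst ha; subst hb
  exact SimpleGraph.Reachable.refl _

lemma triple_to_InT1 {V : Type} (G : SimpleGraph V) (hG : G.Connected)
    {v₁ v₂ v₃ : V} (h12 : v₁ ≠ v₂) (h13 : v₁ ≠ v₃) (h23 : v₂ ≠ v₃)
    (p12 : ∃ p : G.Walk v₁ v₂, p.IsPath ∧ v₃ ∉ p.support)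
    (p13 : ∃ p : G.Walk v₁ v₃, p.IsPath ∧ v₂ ∉ p.support)
    (p23 : ∃ p : G.Walk v₂ v₃, p.IsPath ∧ v₁ ∉ p.support) :
    InT 1 G := by
  refine ⟨hG, {v₁}, {v₂}, {v₃}, ?_, ?_, ?_, ?_, ?_, ?_, ?_, ?_, ?_⟩
  · simpa using h12
  · simpa using h13
  · simpa using h23
  · exact singleton_induce_connected G v₁
  · exact singleton_induce_connected G v₂
  · exact singleton_induce_connected G v₃
  · obtain ⟨p, _, hp3⟩ := p12
    exact ⟨v₁, rfl, v₂, rfl, p, fun x hx hx3 => hp3 (hx3 ▸ hx)⟩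
  · obtain ⟨p, _, hp2⟩ := p13
    exact ⟨v₁, rfl, v₃, rfl, p, fun x hx hx2 => hp2 (hx2 ▸ hx)⟩
  · obtain ⟨p, _, hp1⟩ := p23
    exact ⟨v₂, rfl, v₃, rfl, p, fun x hx hx1 => hp1 (hx1 ▸ hx)⟩

lemma cycle_triple {V : Type} (G : SimpleGraph V) {v : V} (c : G.Walk v v)
    (hc : c.IsCycle) :
    ∃ v₁ v₂ v₃ : V, v₁ ≠ v₂ ∧ v₁ ≠ v₃ ∧ v₂ ≠ v₃ ∧
      (∃ p : G.Walk v₁ v₂, p.IsPath ∧ v₃ ∉ p.support) ∧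
      (∃ p : G.Walk v₁ v₃, p.IsPath ∧ v₂ ∉ p.support) ∧
      (∃ p : G.Walk v₂ v₃, p.IsPath ∧ v₁ ∉ p.support) := by
  cases c with
  | nil => exact absurd rfl hc.ne_nil
  | cons h1 c1 =>
    rename_i w1
    cases c1 with
    | nil =>
      have := hc.three_le_length
      simp [SimpleGraph.Walk.length_cons] at this
    | cons h2 q =>
      rename_i w2
      have htail : ((SimpleGraph.Walk.cons h1 (SimpleGraph.Walk.cons h2 q)).support.tail).Nodup :=
        hc.2
      simp only [SimpleGraph.Walk.support_cons, List.tail_cons, List.nodup_cons] at htail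
      obtain ⟨hw1, hw2nodup⟩ := htail
      have hw1w2 : w1 ≠ w2 := fun h => hw1 (h ▸ q.start_mem_support)
      have hw1q : w1 ∉ q.support := hw1
      have hlen : 1 ≤ q.length := by
        have := hc.three_le_length
        simp only [SimpleGraph.Walk.length_cons] at this
        omega
      have hw2v : w2 ≠ v := by
        cases q with
        | nil => simp at hlen
        | cons h3 r =>
          have hnd := hw2nodup
          simp only [SimpleGraph.Walk.support_cons, List.nodup_cons] at hnd
          exact fun h => hnd.1 (h ▸ r.end_mem_support)
      have hvw1 : v ≠ w1 := h1.ne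
      have hqpath : q.IsPath := by
        refine ⟨?_, hw2nodup⟩
        have := hc.1.1
        simp only [SimpleGraph.Walk.isTrail_cons] at this
        exact this.1.1
      refine ⟨v, w1, w2, hvw1, hw2v.symm, hw1w2, ?_, ?_, ?_⟩
      · refine ⟨h1.toWalk, ?_, ?_⟩
        · simp [SimpleGraph.Walk.isPath_def, hvw1]
        · simp [SimpleGraph.Adj.toWalk, hw2v, hw1w2.symm]
      · refine ⟨q.reverse, hqpath.reverse, ?_⟩
        rw [SimpleGraph.Walk.support_reverse]
        simpa using hw1q
      · refine ⟨h2.toWalk, ?_, ?_⟩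
        · simp [SimpleGraph.Walk.isPath_def, hw1w2]
        · simp [SimpleGraph.Adj.toWalk, hvw1, hw2v.symm]

theorem stmt9 {V : Type} [Fintype V] (G : SimpleGraph V) (hG : G.Connected) (t : ℕ)
    (hcard : Fintype.card V ≤ t)
    (hyp : (∃ (v : V) (c : G.Walk v v), c.IsCycle) ∨ ∃ v : V, 3 ≤ (G.neighborSet v).ncard) :
    (∃ v₁ v₂ v₃ : V, v₁ ≠ v₂ ∧ v₁ ≠ v₃ ∧ v₂ ≠ v₃ ∧
      (∃ p : G.Walk v₁ v₂, p.IsPath ∧ v₃ ∉ p.support) ∧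
      (∃ p : G.Walk v₁ v₃, p.IsPath ∧ v₂ ∉ p.support) ∧
      (∃ p : G.Walk v₂ v₃, p.IsPath ∧ v₁ ∉ p.support)) ∧ InT 1 G := by
  have htriple : ∃ v₁ v₂ v₃ : V, v₁ ≠ v₂ ∧ v₁ ≠ v₃ ∧ v₂ ≠ v₃ ∧
      (∃ p : G.Walk v₁ v₂, p.IsPath ∧ v₃ ∉ p.support) ∧
      (∃ p : G.Walk v₁ v₃, p.IsPath ∧ v₂ ∉ p.support) ∧
      (∃ p : G.Walk v₂ v₃, p.IsPath ∧ v₁ ∉ p.support) := by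
    rcases hyp with ⟨v, c, hc⟩ | ⟨v, hdeg⟩
    · exact cycle_triple G c hc
    · obtain ⟨s, hs, hcard3⟩ := Set.exists_subset_card_eq hdeg
      rw [Set.ncard_eq_three] at hcard3
      obtain ⟨a, b, cc, hab, hac, hbc, rfl⟩ := hcard3
      have hva : G.Adj v a := hs (by simp)
      have hvb : G.Adj v b := hs (by simp)
      have hvc : G.Adj v cc := hs (by simp)
      refine ⟨a, b, cc, hab, hac, hbc, ?_, ?_, ?_⟩
      · refine ⟨(hva.symm.toWalk).append hvb.toWalk, ?_, ?_⟩
        · simp [SimpleGraph.Walk.isPath_def, hva.ne', hvb.ne, hab]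
        · simp [SimpleGraph.Adj.toWalk, hac.symm, hvc.ne', hbc.symm]
      · refine ⟨(hva.symm.toWalk).append hvc.toWalk, ?_, ?_⟩
        · simp [SimpleGraph.Walk.isPath_def, hva.ne', hvc.ne, hac]
        · simp [SimpleGraph.Adj.toWalk, hab.symm, hvb.ne', hbc]
      · refine ⟨(hvb.symm.toWalk).append hvc.toWalk, ?_, ?_⟩
        · simp [SimpleGraph.Walk.isPath_def, hvb.ne', hvc.ne, hbc]
        · simp [SimpleGraph.Adj.toWalk, hab, hva.ne', hac]
  obtain ⟨v₁, v₂, v₃, h12, h13, h23, q12, q13, q23⟩ := htriple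
  exact ⟨⟨v₁, v₂, v₃, h12, h13, h23, q12, q13, q23⟩,
    triple_to_InT1 G hG h12 h13 h23 q12 q13 q23⟩
end

section
/- Every connected supergraph (on the same or larger vertex set, containing the graph as an induced subgraph via a vertex subset) of a graph in T_h also belongs to T_h; precisely, if G is connected, X ⊆ V(G), and G[X] ∈ T_h, then G ∈ T_h. -/
open SimpleGraph

noncomputable def isoInduceEmb {V W : Type} {G : SimpleGraph V} {H : SimpleGraph W}
    (f : G ↪g H) (s : Set V) :
    G.induce s ≃g H.induce (f '' s) where
  toEquiv := Equiv.Set.imageOfInjOn f s (f.injective.injOn)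
  map_rel_iff' := by
    intro a b
    simp [Equiv.Set.imageOfInjOn, f.map_adj_iff]

lemma linkedAvoiding_map {V W : Type} {G : SimpleGraph V} {H : SimpleGraph W}
    (f : G ↪g H) {A B C : Set V} (h : LinkedAvoiding G A B C) :
    LinkedAvoiding H (f '' A) (f '' B) (f '' C) := by
  obtain ⟨a, ha, b, hb, p, hp⟩ := h
  refine ⟨f a, ⟨a, ha, rfl⟩, f b, ⟨b, hb, rfl⟩, p.map f.toHom, ?_⟩
  intro x hx hxC
  rw [Walk.support_map, List.mem_map] at hx
  obtain ⟨y, hy, rfl⟩ := hx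
  obtain ⟨c, hc, hcy⟩ := hxC
  exact hp y hy (f.injective hcy ▸ hc)

lemma inT_iso : ∀ (h : ℕ) {V W : Type} {G : SimpleGraph V} {H : SimpleGraph W},
    (G ≃g H) → InT h G → InT h H := by
  intro h
  induction h with
  | zero => intro V W G H e hG; exact e.connected_iff.mp hG
  | succ h ih =>
    intro V W G H e hG
    obtain ⟨hc, V₁, V₂, V₃, d12, d13, d23, h1, h2, h3, l12, l13, l23⟩ := hG
    refine ⟨e.connected_iff.mp hc, e '' V₁, e '' V₂, e '' V₃,
      (Set.disjoint_image_iff e.injective).mpr d12,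
      (Set.disjoint_image_iff e.injective).mpr d13,
      (Set.disjoint_image_iff e.injective).mpr d23,
      ih (isoInduceEmb e.toEmbedding V₁) h1,
      ih (isoInduceEmb e.toEmbedding V₂) h2,
      ih (isoInduceEmb e.toEmbedding V₃) h3,
      linkedAvoiding_map e.toEmbedding l12,
      linkedAvoiding_map e.toEmbedding l13,
      linkedAvoiding_map e.toEmbedding l23⟩


theorem stmt13 {V : Type} (G : SimpleGraph V) (hG : G.Connected) (X : Set V) (h : ℕ)
    (hX : InT h (G.induce X)) : InT h G := by
  induction h generalizing V with
  | zero => exact hG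
  | succ h ih =>
    obtain ⟨hc, V₁, V₂, V₃, d12, d13, d23, h1, h2, h3, l12, l13, l23⟩ := hX
    have f : G.induce X ↪g G := SimpleGraph.Embedding.induce X
    refine ⟨hG, f '' V₁, f '' V₂, f '' V₃,
      (Set.disjoint_image_iff f.injective).mpr d12,
      (Set.disjoint_image_iff f.injective).mpr d13,
      (Set.disjoint_image_iff f.injective).mpr d23,
      inT_iso h (isoInduceEmb f V₁) h1,
      inT_iso h (isoInduceEmb f V₂) h2,
      inT_iso h (isoInduceEmb f V₃) h3,
      linkedAvoiding_map f l12,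
      linkedAvoiding_map f l13,
      linkedAvoiding_map f l23⟩
end
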